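/- arXiv:2207.12216 — 4 statements merged into one kernel-verified Lean document; each statement's English description precedes it below -/
import Mathlib

section
/- If f, g ∈ S^2, then the product fg ∈ S^2, and moreover ‖(fg)'‖_{H^2} ≤ (2π√3/3) ‖f‖_{S^2} ‖g‖_{S^2}. -/
open Metric Filter

noncomputable def taylorCoeff (f : ℂ → ℂ) (n : ℕ) : ℂ :=
  iteratedDeriv n f 0 / n.factorial

/-- Membership in `S²`: `f` is analytic on the open unit disk, equals its Taylor
series there, and its coefficients satisfy `Σ n² |a n|² < ∞`. -/
def MemS2 (f : ℂ → ℂ) : Prop :=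
  AnalyticOn ℂ f (ball (0:ℂ) 1) ∧
  (∀ z ∈ ball (0:ℂ) 1, HasSum (fun n : ℕ => taylorCoeff f n * z ^ n) (f z)) ∧
  Summable (fun n : ℕ => ((n : ℝ))^2 * ‖taylorCoeff f n‖^2)

/-- The square of the `S²` norm: `|a₀|² + Σ_{n≥1} n² |aₙ|²`. -/
noncomputable def s2NormSq (f : ℂ → ℂ) : ℝ :=
  ‖taylorCoeff f 0‖^2 + ∑' n : ℕ, ((n : ℝ) + 1)^2 * ‖taylorCoeff f (n+1)‖^2

noncomputable def s2Norm (f : ℂ → ℂ) : ℝ := Real.sqrt (s2NormSq f)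

/-- The square of the `H²` norm, in terms of Taylor coefficients. -/
noncomputable def h2NormSq (f : ℂ → ℂ) : ℝ := ∑' n : ℕ, ‖taylorCoeff f n‖^2

noncomputable def h2Norm (f : ℂ → ℂ) : ℝ := Real.sqrt (h2NormSq f)

/-- An operator on functions is bounded on `S²`. -/
def BoundedOpS2 (T : (ℂ → ℂ) → (ℂ → ℂ)) : Prop :=
  (∀ f, MemS2 f → MemS2 (T f)) ∧
  ∃ C : ℝ, ∀ f, MemS2 f → s2Norm (T f) ≤ C * s2Norm f

/-- The operator norm of an operator on `S²`. -/
noncomputable def opNormS2 (T : (ℂ → ℂ) → (ℂ → ℂ)) : ℝ :=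
  sInf {C : ℝ | 0 ≤ C ∧ ∀ f, MemS2 f → s2Norm (T f) ≤ C * s2Norm f}

/-- An (analytic) automorphism of the unit disk. -/
def IsDiskAut (φ : ℂ → ℂ) : Prop :=
  AnalyticOn ℂ φ (ball (0:ℂ) 1) ∧ Set.BijOn φ (ball (0:ℂ) 1) (ball (0:ℂ) 1)
section AuxLemmas
open Finset

-- tsum Cauchy-Schwarz
lemma tsum_CS {x y : ℕ → ℝ} (hx0 : ∀ n, 0 ≤ x n) (hy0 : ∀ n, 0 ≤ y n)
    (hx : Summable fun n => x n ^ 2) (hy : Summable fun n => y n ^ 2) :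
    Summable (fun n => x n * y n) ∧
      ∑' n, x n * y n ≤ Real.sqrt (∑' n, x n ^ 2) * Real.sqrt (∑' n, y n ^ 2) := by
  have hsum : Summable (fun n => x n * y n) := by
    refine Summable.of_nonneg_of_le (fun n => mul_nonneg (hx0 n) (hy0 n))
      (fun n => ?_) ((hx.add hy).div_const 2)
    have h := sq_nonneg (x n - y n)
    nlinarith
  refine ⟨hsum, Summable.tsum_le_of_sum_le hsum fun s => ?_⟩
  have h1 : (∑ n ∈ s, x n * y n) ^ 2 ≤ (∑ n ∈ s, x n ^ 2) * ∑ n ∈ s, y n ^ 2 :=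
    Finset.sum_mul_sq_le_sq_mul_sq s x y
  have h2 : ∑ n ∈ s, x n ^ 2 ≤ ∑' n, x n ^ 2 := Summable.sum_le_tsum s (fun n _ => sq_nonneg _) hx
  have h3 : ∑ n ∈ s, y n ^ 2 ≤ ∑' n, y n ^ 2 := Summable.sum_le_tsum s (fun n _ => sq_nonneg _) hy
  have hnn : 0 ≤ ∑ n ∈ s, x n * y n :=
    Finset.sum_nonneg fun n _ => mul_nonneg (hx0 n) (hy0 n)
  calc ∑ n ∈ s, x n * y n = Real.sqrt ((∑ n ∈ s, x n * y n) ^ 2) := (Real.sqrt_sq hnn).symm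
    _ ≤ Real.sqrt ((∑' n, x n ^ 2) * ∑' n, y n ^ 2) := by
        apply Real.sqrt_le_sqrt
        calc (∑ n ∈ s, x n * y n) ^ 2 ≤ (∑ n ∈ s, x n ^ 2) * ∑ n ∈ s, y n ^ 2 := h1
          _ ≤ (∑' n, x n ^ 2) * ∑' n, y n ^ 2 := by
              apply mul_le_mul h2 h3 (Finset.sum_nonneg fun n _ => sq_nonneg _)
              exact tsum_nonneg fun n => sq_nonneg _
    _ = _ := Real.sqrt_mul (tsum_nonneg fun n => sq_nonneg _) _

-- Minkowski for tsums
lemma tsum_minkowski {x y : ℕ → ℝ} (hx0 : ∀ n, 0 ≤ x n) (hy0 : ∀ n, 0 ≤ y n)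
    (hx : Summable fun n => x n ^ 2) (hy : Summable fun n => y n ^ 2) :
    Summable (fun n => (x n + y n) ^ 2) ∧
      Real.sqrt (∑' n, (x n + y n) ^ 2) ≤
        Real.sqrt (∑' n, x n ^ 2) + Real.sqrt (∑' n, y n ^ 2) := by
  have hsum : Summable (fun n => (x n + y n) ^ 2) := by
    refine Summable.of_nonneg_of_le (fun n => sq_nonneg _) (fun n => ?_)
      (((hx.add hy)).mul_left 2)
    have := sq_nonneg (x n - y n); nlinarith
  refine ⟨hsum, ?_⟩
  set t := Real.sqrt (∑' n, (x n + y n) ^ 2) with ht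
  have ht0 : 0 ≤ t := Real.sqrt_nonneg _
  have hts : t ^ 2 = ∑' n, (x n + y n) ^ 2 := Real.sq_sqrt (tsum_nonneg fun n => sq_nonneg _)
  have h1 := tsum_CS hx0 (fun n => add_nonneg (hx0 n) (hy0 n)) hx hsum
  have h2 := tsum_CS hy0 (fun n => add_nonneg (hx0 n) (hy0 n)) hy hsum
  have key : t ^ 2 ≤ (Real.sqrt (∑' n, x n ^ 2) + Real.sqrt (∑' n, y n ^ 2)) * t := by
    have hexp : ∀ n, (x n + y n) ^ 2 = x n * (x n + y n) + y n * (x n + y n) := by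
      intro n; ring
    rw [hts, tsum_congr hexp, Summable.tsum_add h1.1 h2.1]
    calc ∑' n, x n * (x n + y n) + ∑' n, y n * (x n + y n)
        ≤ Real.sqrt (∑' n, x n ^ 2) * t + Real.sqrt (∑' n, y n ^ 2) * t :=
          add_le_add h1.2 h2.2
      _ = _ := by ring
  rcases eq_or_lt_of_le ht0 with h | h
  · rw [← h]; positivity
  · nlinarith

-- l1 bound from weighted l2 bound
lemma l1_bound {a : ℕ → ℂ} (ha : Summable fun n : ℕ => ((n : ℝ))^2 * ‖a n‖^2) :
    Summable (fun n => ‖a n‖) ∧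
      ∑' n, ‖a n‖ ≤ ‖a 0‖ + (Real.pi / Real.sqrt 6) *
        Real.sqrt (∑' n : ℕ, ((n : ℝ) + 1)^2 * ‖a (n+1)‖^2) := by
  have hshift : Summable (fun n : ℕ => ((n : ℝ) + 1)^2 * ‖a (n+1)‖^2) := by
    have := (summable_nat_add_iff 1).2 ha
    refine this.congr fun n => ?_
    push_cast; ring
  have hsq : Summable (fun n : ℕ => (((n : ℝ) + 1) * ‖a (n+1)‖)^2) := by
    refine hshift.congr fun n => ?_; ring
  have hinv : Summable (fun n : ℕ => ((1:ℝ) / ((n:ℝ)+1))^2) := by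
    have := Real.summable_one_div_nat_pow.2 (le_refl 2)
    refine (summable_nat_add_iff 1).2 this |>.congr fun n => ?_
    push_cast; rw [div_pow]; norm_num
  have hCS := tsum_CS (x := fun n => (1:ℝ) / ((n:ℝ)+1)) (y := fun n => ((n:ℝ)+1) * ‖a (n+1)‖)
    (fun n => by positivity) (fun n => by positivity) hinv hsq
  have heq : ∀ n : ℕ, (1:ℝ) / ((n:ℝ)+1) * (((n:ℝ)+1) * ‖a (n+1)‖) = ‖a (n+1)‖ := by
    intro n
    field_simp
  have hsum1 : Summable (fun n => ‖a (n+1)‖) := by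
    refine hCS.1.congr heq
  have hsum : Summable (fun n => ‖a n‖) := (summable_nat_add_iff 1).1 hsum1
  refine ⟨hsum, ?_⟩
  rw [Summable.tsum_eq_zero_add hsum]
  have hzeta : HasSum (fun n : ℕ => ((1:ℝ) / ((n:ℝ)+1))^2) (Real.pi^2/6) := by
    have h3 : HasSum (fun n : ℕ => (1:ℝ) / ((n+1 : ℕ):ℝ)^2)
        (Real.pi^2/6 - ∑ i ∈ Finset.range 1, (1:ℝ)/(i:ℝ)^2) :=
      (hasSum_nat_add_iff' 1).2 hasSum_zeta_two
    simp only [Finset.range_one, Finset.sum_singleton, Nat.cast_zero] at h3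
    norm_num at h3
    convert h3 using 2 with n
    push_cast
    rw [div_pow]
    norm_num
  have hzt : ∑' n : ℕ, ((1:ℝ) / ((n:ℝ)+1))^2 = Real.pi^2/6 := hzeta.tsum_eq
  have hsqz : Real.sqrt (Real.pi^2/6) = Real.pi / Real.sqrt 6 := by
    rw [show Real.pi^2/6 = (Real.pi/Real.sqrt 6)^2 by
        rw [div_pow, Real.sq_sqrt (by norm_num : (0:ℝ) ≤ 6)]]
    exact Real.sqrt_sq (by positivity)
  gcongr
  calc ∑' n : ℕ, ‖a (n+1)‖ = ∑' n : ℕ, (1:ℝ) / ((n:ℝ)+1) * (((n:ℝ)+1) * ‖a (n+1)‖) :=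
        (tsum_congr heq).symm
    _ ≤ Real.sqrt (∑' n : ℕ, ((1:ℝ)/((n:ℝ)+1))^2) *
          Real.sqrt (∑' n : ℕ, (((n:ℝ)+1) * ‖a (n+1)‖)^2) := hCS.2
    _ = (Real.pi / Real.sqrt 6) * Real.sqrt (∑' n : ℕ, ((n:ℝ)+1)^2 * ‖a (n+1)‖^2) := by
        rw [hzt, hsqz]
        congr 2
        exact tsum_congr fun n => by ring

-- Young's inequality: l2 * l1 -> l2 (for nonneg real sequences)
lemma young {u b : ℕ → ℝ} (hu0 : ∀ n, 0 ≤ u n) (hb0 : ∀ n, 0 ≤ b n)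
    (hu : Summable fun k => u k ^ 2) (hb : Summable b) :
    Summable (fun n => (∑ k ∈ Finset.range (n+1), u k * b (n-k)) ^ 2) ∧
      ∑' n, (∑ k ∈ Finset.range (n+1), u k * b (n-k)) ^ 2 ≤
        (∑' k, u k ^ 2) * (∑' j, b j) ^ 2 := by
  set B := ∑' j, b j with hB
  have hB0 : 0 ≤ B := tsum_nonneg hb0
  set T : ℕ → ℝ := fun n => ∑ k ∈ Finset.range (n+1), u k ^ 2 * b (n-k) with hT
  have hTsum : HasSum T ((∑' k, u k ^ 2) * B) := by
    apply hasSum_sum_range_mul_of_summable_norm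
    · refine Summable.congr hu fun k => ?_
      rw [Real.norm_eq_abs, abs_of_nonneg (sq_nonneg _)]
    · refine Summable.congr hb fun j => ?_
      rw [Real.norm_eq_abs, abs_of_nonneg (hb0 j)]
  have hT0 : ∀ n, 0 ≤ T n := fun n =>
    Finset.sum_nonneg fun k _ => mul_nonneg (sq_nonneg _) (hb0 _)
  have key : ∀ n, (∑ k ∈ Finset.range (n+1), u k * b (n-k)) ^ 2 ≤ B * T n := by
    intro n
    have hcs := Finset.sum_mul_sq_le_sq_mul_sq (Finset.range (n+1))
      (fun k => Real.sqrt (b (n-k))) (fun k => u k * Real.sqrt (b (n-k)))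
    have he : ∀ k ∈ Finset.range (n+1),
        Real.sqrt (b (n-k)) * (u k * Real.sqrt (b (n-k))) = u k * b (n-k) := by
      intro k _
      rw [show Real.sqrt (b (n-k)) * (u k * Real.sqrt (b (n-k)))
          = u k * (Real.sqrt (b (n-k)) * Real.sqrt (b (n-k))) by ring,
        Real.mul_self_sqrt (hb0 _)]
    have he2 : ∀ k ∈ Finset.range (n+1), (Real.sqrt (b (n-k)))^2 = b (n-k) :=
      fun k _ => Real.sq_sqrt (hb0 _)
    have he3 : ∀ k ∈ Finset.range (n+1),
        (u k * Real.sqrt (b (n-k)))^2 = u k ^ 2 * b (n-k) := by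
      intro k _; rw [mul_pow, Real.sq_sqrt (hb0 _)]
    rw [Finset.sum_congr rfl he, Finset.sum_congr rfl he2, Finset.sum_congr rfl he3] at hcs
    refine hcs.trans ?_
    have hble : ∑ k ∈ Finset.range (n+1), b (n-k) ≤ B := by
      have hrefl : ∑ k ∈ Finset.range (n+1), b (n+1-1-k) = ∑ k ∈ Finset.range (n+1), b k :=
        Finset.sum_range_reflect (fun j => b j) (n+1)
      simp only [Nat.add_sub_cancel] at hrefl
      rw [hrefl]
      exact Summable.sum_le_tsum _ (fun k _ => hb0 k) hb
    exact mul_le_mul_of_nonneg_right hble (hT0 n)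
  have hsum : Summable (fun n => (∑ k ∈ Finset.range (n+1), u k * b (n-k)) ^ 2) :=
    Summable.of_nonneg_of_le (fun n => sq_nonneg _) key (hTsum.summable.mul_left B)
  refine ⟨hsum, ?_⟩
  calc ∑' n, (∑ k ∈ Finset.range (n+1), u k * b (n-k)) ^ 2
      ≤ ∑' n, B * T n := Summable.tsum_le_tsum key hsum (hTsum.summable.mul_left B)
    _ = B * ((∑' k, u k ^ 2) * B) := by rw [tsum_mul_left, hTsum.tsum_eq]
    _ = (∑' k, u k ^ 2) * B ^ 2 := by ring

lemma taylorCoeff_deriv (h : ℂ → ℂ) (n : ℕ) :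
    taylorCoeff (deriv h) n = ((n:ℂ)+1) * taylorCoeff h (n+1) := by
  unfold taylorCoeff
  have : iteratedDeriv n (deriv h) 0 = iteratedDeriv (n+1) h 0 := by
    rw [iteratedDeriv_succ']
  rw [this, Nat.factorial_succ]
  have h1 : ((n.factorial : ℂ)) ≠ 0 := Nat.cast_ne_zero.2 n.factorial_ne_zero
  have h2 : ((n:ℂ)+1) ≠ 0 := Nat.cast_add_one_ne_zero n
  push_cast
  field_simp

lemma taylorCoeff_eq_of_hasSum {F : ℂ → ℂ} {c : ℕ → ℂ}
    (hc : Summable fun n => ‖c n‖)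
    (hF : ∀ z ∈ Metric.ball (0:ℂ) 1, HasSum (fun n => c n * z ^ n) (F z)) (n : ℕ) :
    taylorCoeff F n = c n := by
  set p := FormalMultilinearSeries.ofScalars ℂ c with hp
  have hball : HasFPowerSeriesOnBall F p 0 1 := by
    refine ⟨?_, by norm_num, fun {y} hy => ?_⟩
    · have hs : Summable (fun n => ‖p n‖ * ((1:NNReal):ℝ)^n) := by
        refine hc.congr fun n => ?_
        rw [hp, FormalMultilinearSeries.ofScalars_norm]
        norm_num
      simpa using p.le_radius_of_summable_norm hs
    · have hy' : y ∈ Metric.ball (0:ℂ) 1 := by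
        rw [mem_ball_zero_iff]
        rw [mem_emetric_ball_zero_iff, enorm_eq_nnnorm] at hy
        exact_mod_cast hy
      simp only [zero_add]
      convert hF y hy' using 2 with n
      case e'_3 => rfl
      rw [hp, FormalMultilinearSeries.ofScalars_apply_eq, smul_eq_mul]
  have hfact := hball.factorial_smul (1:ℂ) n
  rw [← iteratedDeriv_eq_iteratedFDeriv] at hfact
  have hpn : p n (fun _ => (1:ℂ)) = c n := by
    rw [hp, FormalMultilinearSeries.ofScalars_apply_eq]
    simp
  rw [hpn] at hfact
  unfold taylorCoeff
  rw [← hfact]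
  simp only [nsmul_eq_mul]
  rw [mul_comm, mul_div_assoc, div_self (Nat.cast_ne_zero.2 n.factorial_ne_zero), mul_one]

lemma myCauchyProduct {f g : ℂ → ℂ} {a b : ℕ → ℂ}
    (hfs : ∀ z ∈ Metric.ball (0:ℂ) 1, HasSum (fun n => a n * z ^ n) (f z))
    (hgs : ∀ z ∈ Metric.ball (0:ℂ) 1, HasSum (fun n => b n * z ^ n) (g z))
    (ha : Summable fun n => ‖a n‖) (hb : Summable fun n => ‖b n‖) :
    ∀ z ∈ Metric.ball (0:ℂ) 1,
      HasSum (fun n => (∑ k ∈ Finset.range (n+1), a k * b (n-k)) * z ^ n) (f z * g z) := by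
  intro z hz
  rw [mem_ball_zero_iff] at hz
  have hz1 : ‖z‖ ≤ 1 := le_of_lt hz
  have hA : Summable (fun n => ‖a n * z ^ n‖) := by
    refine Summable.of_nonneg_of_le (fun n => norm_nonneg _) (fun n => ?_) ha
    rw [norm_mul, norm_pow]
    calc ‖a n‖ * ‖z‖ ^ n ≤ ‖a n‖ * 1 :=
          mul_le_mul_of_nonneg_left (pow_le_one₀ (norm_nonneg z) hz1) (norm_nonneg _)
      _ = ‖a n‖ := mul_one _
  have hB : Summable (fun n => ‖b n * z ^ n‖) := by
    refine Summable.of_nonneg_of_le (fun n => norm_nonneg _) (fun n => ?_) hb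
    rw [norm_mul, norm_pow]
    calc ‖b n‖ * ‖z‖ ^ n ≤ ‖b n‖ * 1 :=
          mul_le_mul_of_nonneg_left (pow_le_one₀ (norm_nonneg z) hz1) (norm_nonneg _)
      _ = ‖b n‖ := mul_one _
  have H := hasSum_sum_range_mul_of_summable_norm hA hB
  rw [(hfs z (mem_ball_zero_iff.2 hz)).tsum_eq, (hgs z (mem_ball_zero_iff.2 hz)).tsum_eq] at H
  convert H using 2 with n
  case e'_3 => rfl
  rw [Finset.sum_mul]
  refine Finset.sum_congr rfl fun k hk => ?_
  rw [Finset.mem_range] at hk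
  have hkn : k ≤ n := Nat.lt_succ_iff.mp hk
  have : z ^ k * z ^ (n - k) = z ^ n := by
    rw [← pow_add, Nat.add_sub_cancel' hkn]
  calc a k * b (n-k) * z ^ n = a k * b (n-k) * (z ^ k * z ^ (n-k)) := by rw [this]
    _ = a k * z ^ k * (b (n-k) * z ^ (n-k)) := by ring



lemma two_term (x y : ℝ) (hx : 0 ≤ x) (hy : 0 ≤ y) :
    x + (Real.pi / Real.sqrt 6) * y ≤ (Real.pi / Real.sqrt 3) * Real.sqrt (x^2 + y^2) := by
  set κ := Real.pi / Real.sqrt 6 with hκ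
  have hκ0 : 0 ≤ κ := by positivity
  have hκ2 : κ ^ 2 = Real.pi ^ 2 / 6 := by
    rw [hκ, div_pow, Real.sq_sqrt (by norm_num : (0:ℝ) ≤ 6)]
  have hπ : Real.pi ≥ 3 := le_of_lt Real.pi_gt_three
  have hsq : (x + κ * y) ^ 2 ≤ Real.pi ^ 2 / 3 * (x ^ 2 + y ^ 2) := by
    have hπ2 : Real.pi ^ 2 ≥ 9 := by nlinarith
    nlinarith [sq_nonneg (x - κ * y), sq_nonneg x, sq_nonneg y, mul_nonneg hx hy]
  have h1 : x + κ * y = Real.sqrt ((x + κ * y) ^ 2) :=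
    (Real.sqrt_sq (by positivity)).symm
  rw [h1]
  calc Real.sqrt ((x + κ * y) ^ 2) ≤ Real.sqrt (Real.pi ^ 2 / 3 * (x ^ 2 + y ^ 2)) :=
        Real.sqrt_le_sqrt hsq
    _ = (Real.pi / Real.sqrt 3) * Real.sqrt (x ^ 2 + y ^ 2) := by
        rw [Real.sqrt_mul (by positivity)]
        congr 1
        rw [show Real.pi ^ 2 / 3 = (Real.pi / Real.sqrt 3)^2 by
          rw [div_pow, Real.sq_sqrt (by norm_num : (0:ℝ) ≤ 3)]]
        exact Real.sqrt_sq (by positivity)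

lemma conv_comm (x y : ℕ → ℝ) (n : ℕ) :
    ∑ k ∈ Finset.range (n+1), x k * y (n-k) = ∑ k ∈ Finset.range (n+1), y k * x (n-k) := by
  have := Finset.sum_range_reflect (fun k => x k * y (n-k)) (n+1)
  simp only [Nat.add_sub_cancel] at this
  rw [← this]
  refine Finset.sum_congr rfl fun k hk => ?_
  rw [Finset.mem_range, Nat.lt_succ_iff] at hk
  rw [Nat.sub_sub_self hk, mul_comm]


end AuxLemmas

theorem product_mem_s2_and_deriv_h2_bound (f g : ℂ → ℂ) (hf : MemS2 f) (hg : MemS2 g) :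
    MemS2 (fun z => f z * g z) ∧
      h2Norm (deriv (fun z => f z * g z)) ≤
        (2 * Real.pi / Real.sqrt 3) * (s2Norm f * s2Norm g) := by
  obtain ⟨hfa, hfs, hfsum⟩ := hf
  obtain ⟨hga, hgs, hgsum⟩ := hg
  set a : ℕ → ℂ := taylorCoeff f with ha
  set b : ℕ → ℂ := taylorCoeff g with hb
  set κ := Real.pi / Real.sqrt 6 with hκdef
  -- l1 facts
  obtain ⟨ha1, ha1le⟩ := l1_bound hfsum
  obtain ⟨hb1, hb1le⟩ := l1_bound hgsum
  -- Cauchy product coefficients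
  set c : ℕ → ℂ := fun n => ∑ k ∈ Finset.range (n+1), a k * b (n-k) with hcdef
  have hc1 : Summable (fun n => ‖c n‖) :=
    summable_norm_sum_mul_range_of_summable_norm ha1 hb1
  have hFG := myCauchyProduct hfs hgs ha1 hb1
  have hcoeff : ∀ n, taylorCoeff (fun z => f z * g z) n = c n :=
    taylorCoeff_eq_of_hasSum hc1 hFG
  -- weighted sequences
  set u : ℕ → ℝ := fun k => (k:ℝ) * ‖a k‖ with hudef
  set v : ℕ → ℝ := fun k => (k:ℝ) * ‖b k‖ with hvdef
  have hu2 : Summable (fun k => u k ^ 2) := hfsum.congr fun k => by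
    simp only [hudef]; ring
  have hv2 : Summable (fun k => v k ^ 2) := hgsum.congr fun k => by
    simp only [hvdef]; ring
  have hE0 : ∀ n : ℕ, 0 ≤ ∑ k ∈ Finset.range (n+1), u k * ‖b (n-k)‖ := fun n =>
    Finset.sum_nonneg fun k _ => mul_nonneg (by positivity) (norm_nonneg _)
  have hH0 : ∀ n : ℕ, 0 ≤ ∑ k ∈ Finset.range (n+1), v k * ‖a (n-k)‖ := fun n =>
    Finset.sum_nonneg fun k _ => mul_nonneg (by positivity) (norm_nonneg _)
  obtain ⟨hEsum, hEle⟩ := young (fun k => by positivity) (fun k => norm_nonneg _) hu2 hb1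
  obtain ⟨hHsum, hHle⟩ := young (fun k => by positivity) (fun k => norm_nonneg _) hv2 ha1
  -- the per-n bound
  have hDle : ∀ n : ℕ, (n:ℝ) * ‖c n‖ ≤
      (∑ k ∈ Finset.range (n+1), u k * ‖b (n-k)‖) +
        ∑ k ∈ Finset.range (n+1), v k * ‖a (n-k)‖ := by
    intro n
    have hnc : (n:ℂ) * c n =
        (∑ k ∈ Finset.range (n+1), (k:ℂ) * a k * b (n-k)) +
          ∑ k ∈ Finset.range (n+1), a k * (((n-k : ℕ):ℂ) * b (n-k)) := by
      rw [hcdef]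
      simp only
      rw [Finset.mul_sum, ← Finset.sum_add_distrib]
      refine Finset.sum_congr rfl fun k hk => ?_
      rw [Finset.mem_range, Nat.lt_succ_iff] at hk
      have : ((n - k : ℕ) : ℂ) = (n : ℂ) - (k : ℂ) := Nat.cast_sub hk
      rw [this]; ring
    have h1 : (n:ℝ) * ‖c n‖ = ‖(n:ℂ) * c n‖ := by
      rw [norm_mul, Complex.norm_natCast]
    rw [h1, hnc]
    refine (norm_add_le _ _).trans (add_le_add ?_ ?_)
    · refine (norm_sum_le _ _).trans (le_of_eq ?_)
      refine Finset.sum_congr rfl fun k _ => ?_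
      rw [norm_mul, norm_mul, Complex.norm_natCast, hudef]
    · refine (norm_sum_le _ _).trans (le_of_eq ?_)
      rw [conv_comm (fun k => v k) (fun k => ‖a k‖) n]
      refine Finset.sum_congr rfl fun k _ => ?_
      rw [norm_mul, norm_mul, Complex.norm_natCast, hvdef]
      all_goals ring
  -- summability of D^2 and tsum bound
  obtain ⟨hEHsum, hEHle⟩ := tsum_minkowski hE0 hH0 hEsum hHsum
  have hD2 : Summable (fun n : ℕ => ((n:ℝ) * ‖c n‖) ^ 2) := by
    refine Summable.of_nonneg_of_le (fun n => sq_nonneg _) (fun n => ?_) hEHsum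
    have h0 : (0:ℝ) ≤ (n:ℝ) * ‖c n‖ := by positivity
    exact pow_le_pow_left₀ h0 (hDle n) 2
  have hDtsum : Real.sqrt (∑' n : ℕ, ((n:ℝ) * ‖c n‖) ^ 2) ≤
      Real.sqrt (∑' n : ℕ, (∑ k ∈ Finset.range (n+1), u k * ‖b (n-k)‖) ^ 2) + Real.sqrt (∑' n : ℕ, (∑ k ∈ Finset.range (n+1), v k * ‖a (n-k)‖) ^ 2) := by
    refine le_trans (Real.sqrt_le_sqrt ?_) hEHle
    refine Summable.tsum_le_tsum (fun n => ?_) hD2 hEHsum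
    have h0 : (0:ℝ) ≤ (n:ℝ) * ‖c n‖ := by positivity
    exact pow_le_pow_left₀ h0 (hDle n) 2
  -- norm quantities
  set A0 := ‖a 0‖ with hA0
  set B0 := ‖b 0‖ with hB0
  set A2 := ∑' n : ℕ, ((n:ℝ)+1)^2 * ‖a (n+1)‖^2 with hA2def
  set B2 := ∑' n : ℕ, ((n:ℝ)+1)^2 * ‖b (n+1)‖^2 with hB2def
  set A := Real.sqrt A2 with hAdef
  set B := Real.sqrt B2 with hBdef
  have hA20 : 0 ≤ A2 := tsum_nonneg fun n => by positivity
  have hB20 : 0 ≤ B2 := tsum_nonneg fun n => by positivity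
  -- tsum of u^2 equals A2
  have hu2eq : ∑' k, u k ^ 2 = A2 := by
    rw [Summable.tsum_eq_zero_add hu2]
    simp only [hudef, Nat.cast_zero, zero_mul]
    rw [hA2def]
    norm_num
    exact tsum_congr fun n => by push_cast; ring
  have hv2eq : ∑' k, v k ^ 2 = B2 := by
    rw [Summable.tsum_eq_zero_add hv2]
    simp only [hvdef, Nat.cast_zero, zero_mul]
    rw [hB2def]
    norm_num
    exact tsum_congr fun n => by push_cast; ring
  have hbl1 : 0 ≤ ∑' n, ‖b n‖ := tsum_nonneg fun n => norm_nonneg _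
  have hal1 : 0 ≤ ∑' n, ‖a n‖ := tsum_nonneg fun n => norm_nonneg _
  have hEfinal : Real.sqrt (∑' n : ℕ, (∑ k ∈ Finset.range (n+1), u k * ‖b (n-k)‖) ^ 2) ≤ A * (∑' n, ‖b n‖) := by
    refine le_trans (Real.sqrt_le_sqrt hEle) ?_
    rw [hu2eq, Real.sqrt_mul hA20, Real.sqrt_sq hbl1]
  have hHfinal : Real.sqrt (∑' n : ℕ, (∑ k ∈ Finset.range (n+1), v k * ‖a (n-k)‖) ^ 2) ≤ B * (∑' n, ‖a n‖) := by
    refine le_trans (Real.sqrt_le_sqrt hHle) ?_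
    rw [hv2eq, Real.sqrt_mul hB20, Real.sqrt_sq hal1]
  -- s2Norms
  have hs2f : s2Norm f = Real.sqrt (A0^2 + A2) := rfl
  have hs2g : s2Norm g = Real.sqrt (B0^2 + B2) := rfl
  have hA_le : A ≤ s2Norm f := by
    rw [hs2f, hAdef]
    exact Real.sqrt_le_sqrt (by nlinarith [sq_nonneg A0])
  have hB_le : B ≤ s2Norm g := by
    rw [hs2g, hBdef]
    exact Real.sqrt_le_sqrt (by nlinarith [sq_nonneg B0])
  have hsf0 : 0 ≤ s2Norm f := Real.sqrt_nonneg _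
  have hsg0 : 0 ≤ s2Norm g := Real.sqrt_nonneg _
  have hA0' : 0 ≤ A := Real.sqrt_nonneg _
  have hB0' : 0 ≤ B := Real.sqrt_nonneg _
  -- the key chain
  have hkey : Real.sqrt (∑' n : ℕ, ((n:ℝ) * ‖c n‖) ^ 2) ≤
      (2 * Real.pi / Real.sqrt 3) * (s2Norm f * s2Norm g) := by
    have c1 : ∑' n, ‖b n‖ ≤ B0 + κ * B := hb1le
    have c2 : ∑' n, ‖a n‖ ≤ A0 + κ * A := ha1le
    have c3 : B0 + κ * B ≤ (Real.pi / Real.sqrt 3) * s2Norm g := by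
      rw [hs2g, show B2 = B^2 from (Real.sq_sqrt hB20).symm]
      exact two_term B0 B (norm_nonneg _) hB0'
    have c4 : A0 + κ * A ≤ (Real.pi / Real.sqrt 3) * s2Norm f := by
      rw [hs2f, show A2 = A^2 from (Real.sq_sqrt hA20).symm]
      exact two_term A0 A (norm_nonneg _) hA0'
    calc Real.sqrt (∑' n : ℕ, ((n:ℝ) * ‖c n‖) ^ 2)
        ≤ Real.sqrt (∑' n : ℕ, (∑ k ∈ Finset.range (n+1), u k * ‖b (n-k)‖) ^ 2) + Real.sqrt (∑' n : ℕ, (∑ k ∈ Finset.range (n+1), v k * ‖a (n-k)‖) ^ 2) := hDtsum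
      _ ≤ A * (∑' n, ‖b n‖) + B * (∑' n, ‖a n‖) := add_le_add hEfinal hHfinal
      _ ≤ A * ((Real.pi / Real.sqrt 3) * s2Norm g) +
            B * ((Real.pi / Real.sqrt 3) * s2Norm f) := by
          refine add_le_add ?_ ?_
          · exact mul_le_mul_of_nonneg_left (le_trans c1 c3) hA0'
          · exact mul_le_mul_of_nonneg_left (le_trans c2 c4) hB0'
      _ ≤ s2Norm f * ((Real.pi / Real.sqrt 3) * s2Norm g) +
            s2Norm g * ((Real.pi / Real.sqrt 3) * s2Norm f) := by
          refine add_le_add ?_ ?_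
          · refine mul_le_mul_of_nonneg_right hA_le (by positivity)
          · refine mul_le_mul_of_nonneg_right hB_le (by positivity)
      _ = (2 * Real.pi / Real.sqrt 3) * (s2Norm f * s2Norm g) := by ring
  constructor
  · refine ⟨hfa.mul hga, fun z hz => ?_, ?_⟩
    · have : (fun n : ℕ => taylorCoeff (fun z => f z * g z) n * z ^ n) =
          fun n => c n * z ^ n := funext fun n => by rw [hcoeff n]
      rw [this]
      exact hFG z hz
    · refine hD2.congr fun n => ?_
      rw [hcoeff n]
      ring
  · -- h2Norm bound
    have hderiv : ∀ n : ℕ, taylorCoeff (deriv (fun z => f z * g z)) n =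
        ((n:ℂ)+1) * c (n+1) := by
      intro n
      rw [taylorCoeff_deriv, hcoeff]
    have h2eq : h2NormSq (deriv (fun z => f z * g z)) =
        ∑' n : ℕ, (((n:ℝ)+1) * ‖c (n+1)‖) ^ 2 := by
      unfold h2NormSq
      refine tsum_congr fun n => ?_
      rw [hderiv n, norm_mul]
      have : ‖((n:ℂ)+1)‖ = (n:ℝ)+1 := by
        rw [show ((n:ℂ)+1) = ((n+1 : ℕ):ℂ) by push_cast; ring, Complex.norm_natCast]
        all_goals push_cast
        all_goals ring
      rw [this]
    have hshift : ∑' n : ℕ, (((n:ℝ)+1) * ‖c (n+1)‖) ^ 2 =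
        ∑' n : ℕ, ((n:ℝ) * ‖c n‖) ^ 2 := by
      rw [Summable.tsum_eq_zero_add hD2]
      norm_num
      all_goals exact (tsum_congr fun n => by push_cast; all_goals ring).symm
    unfold h2Norm
    rw [h2eq, hshift]
    exact hkey
end

section
/- If f ∈ S^2 and w ∈ D is a zero of f of order n ≥ 1, then there exists g ∈ S^2 with g(w) ≠ 0 and f(z) = (z−w)^n g(z) for all z ∈ D. -/
open Metric Filter

private lemma emetric_ball_one_eq : Metric.eball (0:ℂ) 1 = Metric.ball (0:ℂ) 1 := by
  simpa using Metric.emetric_ball_nnreal (x := (0:ℂ)) (ε := 1)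

private lemma taylorCoeff_of_series {g : ℂ → ℂ} {b : ℕ → ℂ}
    (h : HasFPowerSeriesAt g (FormalMultilinearSeries.ofScalars ℂ b) 0) (k : ℕ) :
    taylorCoeff g k = b k := by
  obtain ⟨r, hr⟩ := h
  have h1 := hr.factorial_smul (1 : ℂ) k
  rw [FormalMultilinearSeries.ofScalars_apply_eq, ← iteratedDeriv_eq_iteratedFDeriv] at h1
  simp only [one_pow, smul_eq_mul, mul_one, nsmul_eq_mul] at h1
  rw [taylorCoeff, ← h1]
  have : (k.factorial : ℂ) ≠ 0 := by exact_mod_cast k.factorial_ne_zero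
  field_simp

private lemma iteratedDerivWithin_isOpen {s : Set ℂ} {x : ℂ} (n : ℕ) (hs : IsOpen s)
    (hx : x ∈ s) {f : ℂ → ℂ} : iteratedDerivWithin n f s x = iteratedDeriv n f x := by
  rw [iteratedDerivWithin, iteratedDeriv, iteratedFDerivWithin_of_isOpen n hs hx]

private lemma iteratedDeriv_sub_mul (w : ℂ) :
    ∀ (k : ℕ) (G : ℂ → ℂ), AnalyticAt ℂ G w →
      iteratedDeriv (k+1) (fun z => (z - w) * G z) w = ((k:ℂ)+1) * iteratedDeriv k G w := by
  intro k
  induction k with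
  | zero =>
    intro G hG
    rw [iteratedDeriv_one, deriv_fun_mul (differentiableAt_fun_id.sub_const w) hG.differentiableAt,
      deriv_sub_const, deriv_id'']
    simp
  | succ k ih =>
    intro G hG
    obtain ⟨r, hr0, hGr⟩ := hG.exists_ball_analyticOnNhd
    have hso : IsOpen (Metric.ball w r) := isOpen_ball
    have hws : w ∈ Metric.ball w r := mem_ball_self hr0
    have hG' : AnalyticOnNhd ℂ (deriv G) (Metric.ball w r) := hGr.deriv
    have heq : Set.EqOn (deriv (fun z => (z - w) * G z))
        (fun z => G z + (z - w) * deriv G z) (Metric.ball w r) := by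
      intro z hz
      rw [deriv_fun_mul (differentiableAt_fun_id.sub_const w) (hGr z hz).differentiableAt,
        deriv_sub_const, deriv_id'']
      ring
    have hev : deriv (fun z => (z - w) * G z) =ᶠ[nhds w]
        (fun z => G z + (z - w) * deriv G z) :=
      Filter.eventuallyEq_of_mem (hso.mem_nhds hws) heq
    rw [iteratedDeriv_succ', hev.iteratedDeriv_eq (k+1)]
    have hHa : AnalyticOnNhd ℂ (fun z => (z - w) * deriv G z) (Metric.ball w r) :=
      ((analyticOnNhd_id.sub analyticOnNhd_const).mul hG')
    have hGc : ContDiffOn ℂ ((k:ℕ)+1 : ℕ) G (Metric.ball w r) :=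
      hGr.contDiffOn_of_completeSpace
    have hHc : ContDiffOn ℂ ((k:ℕ)+1 : ℕ) (fun z => (z - w) * deriv G z) (Metric.ball w r) :=
      hHa.contDiffOn_of_completeSpace
    have hsplit : iteratedDerivWithin (k+1) (G + fun z => (z - w) * deriv G z)
          (Metric.ball w r) w
        = iteratedDerivWithin (k+1) G (Metric.ball w r) w
          + iteratedDerivWithin (k+1) (fun z => (z - w) * deriv G z) (Metric.ball w r) w :=
      iteratedDerivWithin_add hws hso.uniqueDiffOn (hGc w hws) (hHc w hws)
    have hfeq : (fun z => G z + (z - w) * deriv G z)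
        = (G + fun z => (z - w) * deriv G z) := rfl
    rw [hfeq, ← iteratedDerivWithin_isOpen (k+1) hso hws, hsplit,
      iteratedDerivWithin_isOpen (k+1) hso hws, iteratedDerivWithin_isOpen (k+1) hso hws,
      ih (deriv G) (hG' w hws), ← iteratedDeriv_succ']
    push_cast
    ring

private lemma iteratedDeriv_pow_mul (w : ℂ) :
    ∀ (n : ℕ) (h : ℂ → ℂ), AnalyticAt ℂ h w →
      iteratedDeriv n (fun z => (z - w) ^ n * h z) w = (n.factorial : ℂ) * h w := by
  intro n
  induction n with
  | zero => intro h _; simp [iteratedDeriv_zero]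
  | succ n ihn =>
    intro h hh
    have hfun : (fun z => (z - w) ^ (n+1) * h z)
        = (fun z => (z - w) * ((z - w) ^ n * h z)) := by
      funext z; ring
    have hGa : AnalyticAt ℂ (fun z => (z - w) ^ n * h z) w :=
      (((analyticAt_id.sub analyticAt_const).pow n).mul hh)
    rw [hfun, iteratedDeriv_sub_mul w n _ hGa, ihn h hh]
    rw [Nat.factorial_succ]
    push_cast
    ring

private lemma ennreal_sq_iSup_le (t : ℕ → ENNReal) : (⨆ j, t j)^2 ≤ ∑' j, (t j)^2 := by
  rw [pow_two, ENNReal.iSup_mul]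
  refine iSup_le fun i => ?_
  rw [ENNReal.mul_iSup]
  refine iSup_le fun j => ?_
  rcases le_total (t i) (t j) with h | h
  · calc t i * t j ≤ t j * t j := mul_le_mul_left h _
      _ = (t j)^2 := (pow_two _).symm
      _ ≤ ∑' j, (t j)^2 := ENNReal.le_tsum j
  · calc t i * t j ≤ t i * t i := mul_le_mul_right h _
      _ = (t i)^2 := (pow_two _).symm
      _ ≤ ∑' j, (t j)^2 := ENNReal.le_tsum i

private lemma memS2_div_sub (f : ℂ → ℂ) (hf : MemS2 f) (w : ℂ) (hw : w ∈ ball (0:ℂ) 1)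
    (h0 : f w = 0) :
    ∃ g : ℂ → ℂ, MemS2 g ∧ ∀ z ∈ ball (0:ℂ) 1, f z = (z - w) * g z := by
  obtain ⟨hA, hsum, hS⟩ := hf
  set a : ℕ → ℂ := taylorCoeff f with ha
  set M : ℝ := Real.sqrt (∑' k : ℕ, ((k:ℝ))^2 * ‖a k‖^2) with hMdef
  have hM0 : 0 ≤ M := Real.sqrt_nonneg _
  have hterm_nonneg : ∀ k : ℕ, 0 ≤ ((k:ℝ))^2 * ‖a k‖^2 := fun k => by positivity
  have hM : ∀ m : ℕ, 1 ≤ m → ‖a m‖ ≤ M := by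
    intro m hm
    have h1 : ‖a m‖^2 ≤ ((m:ℝ))^2 * ‖a m‖^2 := by
      have : (1:ℝ) ≤ ((m:ℝ))^2 := by
        have : (1:ℝ) ≤ (m:ℝ) := by exact_mod_cast hm
        nlinarith
      nlinarith [sq_nonneg ‖a m‖]
    have h2 : ((m:ℝ))^2 * ‖a m‖^2 ≤ ∑' k : ℕ, ((k:ℝ))^2 * ‖a k‖^2 :=
      Summable.le_tsum hS m fun k _ => hterm_nonneg k
    have := h1.trans h2
    calc ‖a m‖ = Real.sqrt (‖a m‖^2) := by rw [Real.sqrt_sq (norm_nonneg _)]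
      _ ≤ M := Real.sqrt_le_sqrt this
  set r : ℝ := ‖w‖ with hrdef
  have hr0 : 0 ≤ r := norm_nonneg _
  have hr1 : r < 1 := mem_ball_zero_iff.mp hw
  have hgeo : Summable (fun j : ℕ => M * r ^ j) :=
    (summable_geometric_of_lt_one hr0 hr1).mul_left M
  have htail_norm : ∀ k : ℕ, ∀ j : ℕ, ‖a (k+1+j) * w ^ j‖ ≤ M * r ^ j := by
    intro k j
    rw [norm_mul, norm_pow]
    exact mul_le_mul_of_nonneg_right (hM _ (by omega)) (by positivity)
  have htail_summable_norm : ∀ k : ℕ, Summable (fun j : ℕ => ‖a (k+1+j) * w ^ j‖) := by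
    intro k
    exact Summable.of_nonneg_of_le (fun j => norm_nonneg _) (htail_norm k) hgeo
  have htail_summable : ∀ k : ℕ, Summable (fun j : ℕ => a (k+1+j) * w ^ j) :=
    fun k => (htail_summable_norm k).of_norm
  set b : ℕ → ℂ := fun k => ∑' j : ℕ, a (k+1+j) * w ^ j with hbdef
  set C : ℝ := M * (1 - r)⁻¹ with hCdef
  have hbC : ∀ k : ℕ, ‖b k‖ ≤ C := by
    intro k
    calc ‖b k‖ ≤ ∑' j : ℕ, ‖a (k+1+j) * w ^ j‖ := norm_tsum_le_tsum_norm (htail_summable_norm k)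
      _ ≤ ∑' j : ℕ, M * r ^ j := Summable.tsum_le_tsum (htail_norm k) (htail_summable_norm k) hgeo
      _ = M * ∑' j : ℕ, r ^ j := tsum_mul_left
      _ = C := by rw [tsum_geometric_of_lt_one hr0 hr1]
  have hC0 : 0 ≤ C := le_trans (norm_nonneg _) (hbC 0)
  have hbsum : ∀ z : ℂ, ‖z‖ < 1 → Summable (fun k : ℕ => b k * z ^ k) := by
    intro z hz
    refine Summable.of_norm (Summable.of_nonneg_of_le (fun k => norm_nonneg _) ?_
      ((summable_geometric_of_lt_one (norm_nonneg z) hz).mul_left C))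
    intro k
    rw [norm_mul, norm_pow]
    exact mul_le_mul_of_nonneg_right (hbC k) (by positivity)
  set g : ℂ → ℂ := fun z => ∑' k : ℕ, b k * z ^ k with hgdef
  have hg : ∀ z : ℂ, ‖z‖ < 1 → HasSum (fun k : ℕ => b k * z ^ k) (g z) :=
    fun z hz => (hbsum z hz).hasSum
  -- recurrence
  have hshift : ∀ k : ℕ, b k = a (k+1) + w * b (k+1) := by
    intro k
    have h1 : b k = a (k+1+0) * w ^ 0 + ∑' j : ℕ, a (k+1+(j+1)) * w ^ (j+1) :=
      Summable.tsum_eq_zero_add (htail_summable k)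
    have h2 : ∀ j : ℕ, a (k+1+(j+1)) * w ^ (j+1) = w * (a ((k+1)+1+j) * w ^ j) := by
      intro j
      rw [show k+1+(j+1) = (k+1)+1+j from by omega]
      ring
    rw [h1, tsum_congr h2, tsum_mul_left]
    simp
    left; rfl
  have hbase : a 0 = -(w * b 0) := by
    have hsw : Summable (fun k : ℕ => a k * w ^ k) := (hsum w hw).summable
    have h1 : (0:ℂ) = a 0 * w ^ 0 + ∑' j : ℕ, a (j+1) * w ^ (j+1) := by
      rw [← Summable.tsum_eq_zero_add hsw, (hsum w hw).tsum_eq, h0]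
    have h2 : ∀ j : ℕ, a (j+1) * w ^ (j+1) = w * (a (0+1+j) * w ^ j) := by
      intro j
      rw [show j+1 = 0+1+j from by omega]
      ring
    rw [tsum_congr h2, tsum_mul_left] at h1
    simp only [pow_zero, mul_one] at h1
    have hb0 : b 0 = ∑' (x : ℕ), a (0+1+x) * w ^ x := rfl
    rw [← hb0] at h1
    linear_combination -h1
  -- factorization identity
  have hfactor : ∀ z ∈ ball (0:ℂ) 1, f z = (z - w) * g z := by
    intro z hzb
    have hz : ‖z‖ < 1 := mem_ball_zero_iff.mp hzb
    set u' : ℕ → ℂ := fun k => if k = 0 then 0 else b (k-1) * z ^ k with hu'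
    have H1 : HasSum (fun k : ℕ => b k * z ^ (k+1)) (z * g z) := by
      have h := (hg z hz).mul_left z
      have : (fun k : ℕ => b k * z ^ (k+1)) = fun k => z * (b k * z ^ k) := by
        funext k; ring
      rwa [this]
    have hcomp : (u' ∘ Nat.succ) = fun k : ℕ => b k * z ^ (k+1) := by
      funext k
      simp [hu', Nat.succ_ne_zero]
    have H1' : HasSum u' (z * g z) := by
      refine (Function.Injective.hasSum_iff Nat.succ_injective ?_).mp (by rwa [hcomp])
      intro x hx
      have hx0 : x = 0 := by
        cases x with
        | zero => rfl
        | succ m => exact absurd ⟨m, rfl⟩ hx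
      simp [hu', hx0]
    have H3 : HasSum (fun k : ℕ => u' k - w * (b k * z ^ k)) (z * g z - w * g z) :=
      H1'.sub ((hg z hz).mul_left w)
    have hkey : (fun k : ℕ => u' k - w * (b k * z ^ k)) = fun k : ℕ => a k * z ^ k := by
      funext k
      cases k with
      | zero => simp [hu', hbase]
      | succ m =>
        simp only [hu', Nat.succ_ne_zero, if_false, Nat.succ_sub_one]
        rw [hshift m]
        ring
    rw [hkey] at H3
    have := (hsum z hzb).unique H3
    rw [this]; ring
  -- power series of g
  set P : FormalMultilinearSeries ℂ ℂ ℂ := FormalMultilinearSeries.ofScalars ℂ b with hP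
  have hPnorm : ∀ n : ℕ, ‖P n‖ * (1:ℝ) ^ n ≤ C := by
    intro n
    rw [one_pow, mul_one, hP, FormalMultilinearSeries.ofScalars_norm]
    exact hbC n
  have hPr : (1:ENNReal) ≤ P.radius := by
    simpa using P.le_radius_of_bound C (r := 1) hPnorm
  have hball : HasFPowerSeriesOnBall g P 0 1 := by
    refine ⟨hPr, zero_lt_one, ?_⟩
    intro y hy
    have hy1 : ‖y‖ < 1 := by
      rw [emetric_ball_one_eq] at hy
      exact mem_ball_zero_iff.mp hy
    have : (fun n : ℕ => P n fun _ => y) = fun n : ℕ => b n * y ^ n := by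
      funext n
      rw [hP, FormalMultilinearSeries.ofScalars_apply_eq, smul_eq_mul]
    rw [this, zero_add]
    exact hg y hy1
  have htc : ∀ k : ℕ, taylorCoeff g k = b k :=
    taylorCoeff_of_series hball.hasFPowerSeriesAt
  have hgA : AnalyticOnNhd ℂ g (ball (0:ℂ) 1) := by
    rw [← emetric_ball_one_eq]
    exact hball.analyticOnNhd
  -- summability
  have hsummb : Summable (fun k : ℕ => ((k:ℝ))^2 * ‖taylorCoeff g k‖^2) := by
    simp only [htc]
    set rr : NNReal := ‖w‖₊ with hrr
    have hrr1 : rr < 1 := by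
      rw [← NNReal.coe_lt_coe]
      exact hr1
    set sq : NNReal := NNReal.sqrt rr with hsq
    have hs1 : sq < 1 := by
      rw [hsq, ← NNReal.sqrt_one]
      exact NNReal.sqrt_lt_sqrt.mpr hrr1
    set σ : ENNReal := (sq : ENNReal) with hσ
    set ρ : ENNReal := (rr : ENNReal) with hρ
    have hσ1 : σ < 1 := by rw [hσ]; exact_mod_cast hs1
    have hρ1 : ρ < 1 := by rw [hρ]; exact_mod_cast hrr1
    have hσρ : σ * σ = ρ := by
      rw [hσ, hρ, ← ENNReal.coe_mul, NNReal.mul_self_sqrt]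
    have hT : (∑' j : ℕ, σ ^ j) ≠ ⊤ := by
      rw [ENNReal.tsum_geometric]
      exact ENNReal.inv_ne_top.mpr (tsub_pos_iff_lt.mpr hσ1).ne'
    have hT' : (∑' j : ℕ, ρ ^ j) ≠ ⊤ := by
      rw [ENNReal.tsum_geometric]
      exact ENNReal.inv_ne_top.mpr (tsub_pos_iff_lt.mpr hρ1).ne'
    set D : ℕ → ENNReal := fun m => (m : ENNReal) * (‖a m‖₊ : ENNReal) with hD
    have hDD : (∑' m : ℕ, (D m)^2) ≠ ⊤ := by
      have h1 : Summable (fun m : ℕ => (((m : NNReal) * ‖a m‖₊)^2 : NNReal)) := by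
        rw [← NNReal.summable_coe]
        convert hS using 2 with m
        push_cast [coe_nnnorm]
        ring
      have heq : ∀ m : ℕ, ((((m : NNReal) * ‖a m‖₊)^2 : NNReal) : ENNReal) = (D m)^2 := by
        intro m
        rw [hD]
        push_cast
        ring
      rw [← tsum_congr heq]
      exact ENNReal.tsum_coe_ne_top_iff_summable.mpr h1
    have hB : ∀ k : ℕ, (‖b k‖₊ : ENNReal) ≤ ∑' j : ℕ, (‖a (k+1+j)‖₊ : ENNReal) * rr ^ j := by
      intro k
      have hnn : Summable (fun j : ℕ => ‖a (k+1+j) * w ^ j‖₊) := by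
        rw [← NNReal.summable_coe]
        simpa [coe_nnnorm] using htail_summable_norm k
      calc (‖b k‖₊ : ENNReal)
          ≤ ((∑' j : ℕ, ‖a (k+1+j) * w ^ j‖₊ : NNReal) : ENNReal) :=
            ENNReal.coe_le_coe.mpr (nnnorm_tsum_le hnn)
        _ = ∑' j : ℕ, ((‖a (k+1+j) * w ^ j‖₊ : ENNReal)) := ENNReal.coe_tsum hnn
        _ = ∑' j : ℕ, (‖a (k+1+j)‖₊ : ENNReal) * rr ^ j := by
            refine tsum_congr fun j => ?_
            rw [nnnorm_mul, nnnorm_pow]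
            push_cast
            rfl
    have hkmain : ∀ k : ℕ, ((k : ENNReal) * (‖b k‖₊ : ENNReal))^2
        ≤ (∑' j : ℕ, (D (k+1+j))^2 * ρ ^ j) * (∑' j : ℕ, σ ^ j)^2 := by
      intro k
      set t : ℕ → ENNReal := fun j => D (k+1+j) * σ ^ j with ht
      have h1 : (k : ENNReal) * (‖b k‖₊ : ENNReal) ≤ ∑' j : ℕ, t j * σ ^ j := by
        calc (k : ENNReal) * (‖b k‖₊ : ENNReal)
            ≤ (k : ENNReal) * ∑' j : ℕ, (‖a (k+1+j)‖₊ : ENNReal) * rr ^ j :=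
              mul_le_mul_right (hB k) _
          _ = ∑' j : ℕ, (k : ENNReal) * ((‖a (k+1+j)‖₊ : ENNReal) * rr ^ j) :=
              ENNReal.tsum_mul_left.symm
          _ ≤ ∑' j : ℕ, t j * σ ^ j := by
              refine Summable.tsum_le_tsum (fun j => ?_) ENNReal.summable ENNReal.summable
              rw [ht, hD]
              have hcast : (k : ENNReal) ≤ ((k+1+j : ℕ) : ENNReal) :=
                Nat.cast_le.mpr (by omega)
              calc (k : ENNReal) * ((‖a (k+1+j)‖₊ : ENNReal) * rr ^ j)
                  ≤ ((k+1+j : ℕ) : ENNReal) * ((‖a (k+1+j)‖₊ : ENNReal) * rr ^ j) :=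
                    mul_le_mul_left hcast _
                _ = ((k+1+j : ℕ) : ENNReal) * (‖a (k+1+j)‖₊ : ENNReal) * σ ^ j * σ ^ j := by
                    have hσρ' : σ * σ = ((rr : ENNReal)) := hσρ
                    push_cast
                    rw [← hσρ', mul_pow]
                    ring
      have h2 : ∑' j : ℕ, t j * σ ^ j ≤ (⨆ j, t j) * ∑' j : ℕ, σ ^ j := by
        calc ∑' j : ℕ, t j * σ ^ j ≤ ∑' j : ℕ, (⨆ i, t i) * σ ^ j :=
              Summable.tsum_le_tsum (fun j => mul_le_mul_left (le_iSup t j) _)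
                ENNReal.summable ENNReal.summable
          _ = (⨆ i, t i) * ∑' j : ℕ, σ ^ j := ENNReal.tsum_mul_left
      have h3 : ((k : ENNReal) * (‖b k‖₊ : ENNReal))^2
          ≤ ((⨆ j, t j) * ∑' j : ℕ, σ ^ j)^2 :=
        pow_le_pow_left' (h1.trans h2) 2
      refine h3.trans ?_
      rw [mul_pow]
      refine mul_le_mul_left ((ennreal_sq_iSup_le t).trans ?_) _
      refine le_of_eq (tsum_congr fun j => ?_)
      rw [ht, mul_pow, ← pow_mul, mul_comm j 2, pow_mul, pow_two σ, hσρ]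
    have hfin : (∑' k : ℕ, ((k : ENNReal) * (‖b k‖₊ : ENNReal))^2) ≠ ⊤ := by
      refine ne_top_of_le_ne_top ?_ (Summable.tsum_le_tsum hkmain ENNReal.summable ENNReal.summable)
      have hswap : (∑' k : ℕ, (∑' j : ℕ, (D (k+1+j))^2 * ρ ^ j) * (∑' j : ℕ, σ ^ j)^2)
          = (∑' j : ℕ, ∑' k : ℕ, (D (k+1+j))^2 * ρ ^ j) * (∑' j : ℕ, σ ^ j)^2 := by
        rw [ENNReal.tsum_mul_right, ENNReal.tsum_comm]
      rw [hswap]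
      refine ENNReal.mul_ne_top ?_ (ENNReal.pow_ne_top hT)
      have hbound : (∑' j : ℕ, ∑' k : ℕ, (D (k+1+j))^2 * ρ ^ j)
          ≤ (∑' m : ℕ, (D m)^2) * ∑' j : ℕ, ρ ^ j := by
        calc ∑' j : ℕ, ∑' k : ℕ, (D (k+1+j))^2 * ρ ^ j
            = ∑' j : ℕ, (∑' k : ℕ, (D (k+1+j))^2) * ρ ^ j := by
              refine tsum_congr fun j => ?_
              rw [ENNReal.tsum_mul_right]
          _ ≤ ∑' j : ℕ, (∑' m : ℕ, (D m)^2) * ρ ^ j := by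
              refine Summable.tsum_le_tsum (fun j => mul_le_mul_left ?_ _)
                ENNReal.summable ENNReal.summable
              have hinj : Function.Injective (fun k : ℕ => k + (1+j)) :=
                add_left_injective (1+j)
              have := ENNReal.tsum_comp_le_tsum_of_injective hinj (fun m => (D m)^2)
              calc ∑' k : ℕ, (D (k+1+j))^2
                  = ∑' k : ℕ, (D (k+(1+j)))^2 := by
                    refine tsum_congr fun k => ?_
                    congr 2
                    omega
                _ ≤ ∑' m : ℕ, (D m)^2 := this
          _ = (∑' m : ℕ, (D m)^2) * ∑' j : ℕ, ρ ^ j := ENNReal.tsum_mul_left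
      exact ne_top_of_le_ne_top (ENNReal.mul_ne_top hDD hT') hbound
    have h1 : Summable (fun k : ℕ => (((k : NNReal) * ‖b k‖₊)^2 : NNReal)) := by
      refine ENNReal.tsum_coe_ne_top_iff_summable.mp ?_
      have heq2 : ∀ k : ℕ, ((((k : NNReal) * ‖b k‖₊)^2 : NNReal) : ENNReal)
          = ((k : ENNReal) * (‖b k‖₊ : ENNReal))^2 := by
        intro k
        push_cast
        ring
      rw [tsum_congr heq2]
      exact hfin
    rw [← NNReal.summable_coe] at h1
    have heq3 : (fun k : ℕ => ((k:ℝ))^2 * ‖b k‖^2)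
        = fun k : ℕ => ((((k : NNReal) * ‖b k‖₊)^2 : NNReal) : ℝ) := by
      funext k
      push_cast [coe_nnnorm]
      ring
    rw [heq3]
    exact h1
  refine ⟨g, ⟨hgA.analyticOn, ?_, hsummb⟩, hfactor⟩
  intro z hz
  simp only [htc]
  exact hg z (mem_ball_zero_iff.mp hz)

private lemma factor_rep (f : ℂ → ℂ) (hf : MemS2 f) (w : ℂ) (hw : w ∈ ball (0:ℂ) 1) :
    ∀ n : ℕ, (∀ k < n, iteratedDeriv k f w = 0) →
      ∃ g : ℂ → ℂ, MemS2 g ∧ (∀ z ∈ ball (0:ℂ) 1, f z = (z - w) ^ n * g z) ∧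
        iteratedDeriv n f w = (n.factorial : ℂ) * g w := by
  intro n
  induction n with
  | zero => intro _; exact ⟨f, hf, by simp, by simp [iteratedDeriv_zero]⟩
  | succ n ih =>
    intro hz
    obtain ⟨g, hg, hrep, hder⟩ := ih (fun k hk => hz k (hk.trans n.lt_succ_self))
    have hgw : g w = 0 := by
      have h1 := hz n n.lt_succ_self
      rw [h1] at hder
      have hfac : (n.factorial : ℂ) ≠ 0 := by exact_mod_cast n.factorial_ne_zero
      exact (mul_eq_zero.mp hder.symm).resolve_left hfac
    obtain ⟨h, hh, hrep2⟩ := memS2_div_sub g hg w hw hgw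
    refine ⟨h, hh, ?_, ?_⟩
    · intro z hzb
      rw [hrep z hzb, hrep2 z hzb]
      ring
    · have hev : f =ᶠ[nhds w] (fun z => (z - w) ^ (n+1) * h z) :=
        Filter.eventuallyEq_of_mem (isOpen_ball.mem_nhds hw)
          (fun z hzb => by rw [hrep z hzb, hrep2 z hzb]; ring)
      have hhw : AnalyticAt ℂ h w :=
        ((isOpen_ball.analyticOn_iff_analyticOnNhd).mp hh.1) w hw
      rw [hev.iteratedDeriv_eq (n+1), iteratedDeriv_pow_mul w (n+1) h hhw]

theorem factor_zero_of_order (f : ℂ → ℂ) (hf : MemS2 f) (w : ℂ) (hw : w ∈ ball (0:ℂ) 1)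
    (n : ℕ) (hn : 1 ≤ n)
    (hzero : ∀ k < n, iteratedDeriv k f w = 0) (hnz : iteratedDeriv n f w ≠ 0) :
    ∃ g : ℂ → ℂ, MemS2 g ∧ g w ≠ 0 ∧ ∀ z ∈ ball (0:ℂ) 1, f z = (z - w) ^ n * g z := by
  obtain ⟨g, hg, hrep, hder⟩ := factor_rep f hf w hw n hzero
  refine ⟨g, hg, ?_, hrep⟩
  intro hgw
  rw [hgw, mul_zero] at hder
  exact hnz hder
end

section
/- For each w in the open unit disk, the kernel of the evaluation functional ev_w on S^2 equals the range of the operator M_z − wI, where M_z is multiplication by the identity function; that is, f ∈ S^2 satisfies f(w) = 0 if and only if f(z) = (z−w)g(z) for some g ∈ S^2. -/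
open Metric Filter

/-- Cauchy–Schwarz inequality for infinite sums of nonnegative reals. -/
lemma tsum_cauchy_schwarz (x y : ℕ → ℝ) (hx : ∀ n, 0 ≤ x n) (hy : ∀ n, 0 ≤ y n)
    (h1 : Summable (fun n => x n ^ 2)) (h2 : Summable (fun n => y n ^ 2)) :
    (∑' n, x n * y n) ^ 2 ≤ (∑' n, x n ^ 2) * (∑' n, y n ^ 2) := by
  have hs : Summable (fun n => x n * y n) := by
    refine Summable.of_nonneg_of_le (fun n => mul_nonneg (hx n) (hy n)) (fun n => ?_)
      ((h1.add h2).mul_left (1/2 : ℝ))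
    have := two_mul_le_add_sq (x n) (y n)
    nlinarith
  have hT : Filter.Tendsto (fun N => (∑ n ∈ Finset.range N, x n * y n) ^ 2) atTop
      (nhds ((∑' n, x n * y n) ^ 2)) := (hs.hasSum.tendsto_sum_nat).pow 2
  refine le_of_tendsto hT (Filter.Eventually.of_forall fun N => ?_)
  calc (∑ n ∈ Finset.range N, x n * y n) ^ 2
      ≤ (∑ n ∈ Finset.range N, x n ^ 2) * (∑ n ∈ Finset.range N, y n ^ 2) :=
        Finset.sum_mul_sq_le_sq_mul_sq _ _ _
    _ ≤ (∑' n, x n ^ 2) * (∑' n, y n ^ 2) := by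
        refine mul_le_mul (Summable.sum_le_tsum _ (fun i _ => sq_nonneg _) h1)
          (Summable.sum_le_tsum _ (fun i _ => sq_nonneg _) h2)
          (Finset.sum_nonneg fun i _ => sq_nonneg _) (tsum_nonneg fun i => sq_nonneg _)

theorem ker_ev_eq_range_shift (w : ℂ) (hw : w ∈ ball (0:ℂ) 1)
    (f : ℂ → ℂ) (hf : MemS2 f) :
    f w = 0 ↔ ∃ g : ℂ → ℂ, MemS2 g ∧ ∀ z ∈ ball (0:ℂ) 1, f z = (z - w) * g z := by
  obtain ⟨hfa, hfs, hfsum⟩ := hf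
  constructor
  · intro hfw
    set a : ℕ → ℂ := taylorCoeff f with ha
    have hr1 : ‖w‖ < 1 := by simpa [mem_ball_zero_iff] using hw
    set r : ℝ := ‖w‖ with hrdef
    have hr0 : 0 ≤ r := norm_nonneg w
    have hgeo : Summable (fun k : ℕ => r ^ k) := summable_geometric_of_lt_one hr0 hr1
    set S : ℝ := ∑' n : ℕ, ((n : ℝ))^2 * ‖a n‖^2 with hSdef
    have hma : ∀ m : ℕ, (m : ℝ) * ‖a m‖ ≤ Real.sqrt S := by
      intro m
      have h1 : ((m:ℝ) * ‖a m‖)^2 ≤ S := by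
        rw [mul_pow]
        exact Summable.le_tsum hfsum m (fun n _ => by positivity)
      calc (m:ℝ) * ‖a m‖ = Real.sqrt (((m:ℝ) * ‖a m‖)^2) :=
            (Real.sqrt_sq (by positivity)).symm
        _ ≤ Real.sqrt S := Real.sqrt_le_sqrt h1
    set C : ℝ := Real.sqrt S + ‖a 0‖ with hCdef
    have hC0 : 0 ≤ C := by positivity
    have haC : ∀ m, ‖a m‖ ≤ C := by
      intro m
      rcases Nat.eq_zero_or_pos m with h | h
      · subst h
        simp [hCdef]
      · have h1 : (1:ℝ) ≤ (m:ℝ) := by exact_mod_cast h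
        have h2 := hma m
        have h3 := norm_nonneg (a m)
        have h4 := norm_nonneg (a 0)
        rw [hCdef]
        nlinarith
    have hsumtail : ∀ n : ℕ, Summable (fun k : ℕ => ‖a (n+1+k)‖ * r ^ k) := fun n =>
      Summable.of_nonneg_of_le (fun k => by positivity)
        (fun k => mul_le_mul_of_nonneg_right (haC _) (by positivity)) (hgeo.mul_left C)
    have hsummand : ∀ n : ℕ, Summable (fun k : ℕ => a (n+1+k) * w ^ k) := fun n =>
      Summable.of_norm (by simpa [norm_mul, norm_pow] using hsumtail n)
    set b : ℕ → ℂ := fun n => ∑' k : ℕ, a (n+1+k) * w ^ k with hb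
    have hrec : ∀ n : ℕ, b n = a (n+1) + w * b (n+1) := by
      intro n
      have h0 := Summable.tsum_eq_zero_add (hsummand n)
      simp only [hb]
      rw [h0]
      congr 1
      · simp
      · rw [← tsum_mul_left]
        refine tsum_congr fun k => ?_
        rw [show n + 1 + 1 + k = n + 1 + (k + 1) from by omega, pow_succ]
        ring
    have hfw' : a 0 + w * b 0 = 0 := by
      have hW : HasSum (fun n : ℕ => a n * w ^ n) (f w) := hfs w hw
      have h0 := Summable.tsum_eq_zero_add hW.summable
      rw [hW.tsum_eq, hfw] at h0
      have h1 : ∑' k : ℕ, a (k + 1) * w ^ (k + 1) = w * b 0 := by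
        simp only [hb]
        rw [← tsum_mul_left]
        refine tsum_congr fun k => ?_
        rw [show 0 + 1 + k = k + 1 from by omega, pow_succ]
        ring
      rw [h1] at h0
      have := h0.symm
      simpa using this
    have hbnorm : ∀ n, ‖b n‖ ≤ ∑' k : ℕ, ‖a (n+1+k)‖ * r ^ k := by
      intro n
      simp only [hb]
      calc ‖∑' k : ℕ, a (n+1+k) * w ^ k‖ ≤ ∑' k : ℕ, ‖a (n+1+k) * w ^ k‖ :=
            norm_tsum_le_tsum_norm (by simpa [norm_mul, norm_pow] using hsumtail n)
        _ = ∑' k : ℕ, ‖a (n+1+k)‖ * r ^ k := by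
            refine tsum_congr fun k => ?_
            rw [norm_mul, norm_pow]
    have hbM : ∀ n, ‖b n‖ ≤ C * (1 - r)⁻¹ := by
      intro n
      refine (hbnorm n).trans ?_
      rw [← tsum_geometric_of_lt_one hr0 hr1, ← tsum_mul_left]
      exact Summable.tsum_le_tsum (fun k => mul_le_mul_of_nonneg_right (haC _) (by positivity))
        (hsumtail n) (hgeo.mul_left C)
    set p : FormalMultilinearSeries ℂ ℂ ℂ := FormalMultilinearSeries.ofScalars ℂ b with hp
    have hrad : (1 : ENNReal) ≤ p.radius := by
      have := p.le_radius_of_bound (C * (1 - r)⁻¹) (r := 1) (fun n => by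
        simp only [hp, FormalMultilinearSeries.ofScalars_norm, NNReal.coe_one, one_pow, mul_one]
        exact hbM n)
      simpa using this
    have hpball : HasFPowerSeriesOnBall p.sum p 0 p.radius :=
      p.hasFPowerSeriesOnBall (lt_of_lt_of_le zero_lt_one hrad)
    set g : ℂ → ℂ := p.sum with hg
    have hmem : ∀ z : ℂ, z ∈ ball (0:ℂ) 1 → z ∈ Metric.eball (0:ℂ) p.radius := by
      intro z hz
      rw [mem_ball_zero_iff] at hz
      rw [mem_emetric_ball_zero_iff]
      calc (‖z‖₊ : ENNReal) < 1 := by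
            rw [← ENNReal.coe_one, ENNReal.coe_lt_coe, ← NNReal.coe_lt_coe]
            simpa using hz
        _ ≤ p.radius := hrad
    have hgsum : ∀ z ∈ ball (0:ℂ) 1, HasSum (fun n : ℕ => b n * z ^ n) (g z) := by
      intro z hz
      have h := hpball.hasSum (hmem z hz)
      rw [zero_add] at h
      have heq : (fun n : ℕ => p n fun _ => z) = fun n : ℕ => b n * z ^ n := by
        funext n
        rw [hp, FormalMultilinearSeries.ofScalars_apply_eq, smul_eq_mul]
      rwa [heq] at h
    have hcoeff : ∀ n, taylorCoeff g n = b n := by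
      intro n
      have h1 := hpball.factorial_smul (1 : ℂ) n
      have h2 : iteratedDeriv n g 0 = (n.factorial : ℂ) * b n := by
        rw [iteratedDeriv_eq_iteratedFDeriv, ← h1, hp,
          FormalMultilinearSeries.ofScalars_apply_eq]
        simp [nsmul_eq_mul]
      have hne : (n.factorial : ℂ) ≠ 0 := Nat.cast_ne_zero.mpr n.factorial_ne_zero
      rw [taylorCoeff, h2, mul_comm, mul_div_assoc, div_self hne, mul_one]
    have hganal : AnalyticOn ℂ g (ball (0:ℂ) 1) := fun z hz =>
      (hpball.analyticAt_of_mem (hmem z hz)).analyticWithinAt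
    -- summability of `n ↦ n² ‖b n‖²`
    have hG : Summable (fun q : ℕ × ℕ => (((q.1 : ℝ))^2 * ‖a q.1‖^2) * r ^ q.2) :=
      hfsum.mul_of_nonneg hgeo (fun n => by positivity) (fun k => by positivity)
    have he : Function.Injective (fun q : ℕ × ℕ => ((q.1 + 1 + q.2, q.2) : ℕ × ℕ)) := by
      rintro ⟨n, k⟩ ⟨n', k'⟩ h
      simp only [Prod.mk.injEq] at h
      obtain ⟨h1, h2⟩ := h
      subst h2
      have : n = n' := by omega
      simp [this]
    have hF : Summable (fun q : ℕ × ℕ =>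
        (((q.1 + 1 + q.2 : ℕ) : ℝ))^2 * ‖a (q.1 + 1 + q.2)‖^2 * r ^ q.2) := by
      exact (hG.comp_injective he).congr fun q => rfl
    have hFfiber : ∀ n : ℕ, Summable (fun k : ℕ =>
        (((n + 1 + k : ℕ) : ℝ))^2 * ‖a (n + 1 + k)‖^2 * r ^ k) := by
      intro n
      have hinj : Function.Injective (fun k : ℕ => ((n, k) : ℕ × ℕ)) := fun k k' h => by
        simpa using h
      exact (hF.comp_injective hinj).congr fun k => rfl
    set v : ℕ → ℝ := fun n => ∑' k : ℕ, (((n + 1 + k : ℕ) : ℝ))^2 * ‖a (n + 1 + k)‖^2 * r ^ k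
      with hv
    have hvsum : Summable v :=
      ⟨_, hF.hasSum.prod_fiberwise (fun n => (hFfiber n).hasSum)⟩
    have hkey : ∀ n : ℕ, ((n : ℝ))^2 * ‖b n‖^2 ≤ (1 - r)⁻¹ * v n := by
      intro n
      have hx2 : ∀ k : ℕ, Real.sqrt r ^ k * Real.sqrt r ^ k = r ^ k := fun k => by
        rw [← mul_pow, Real.mul_self_sqrt hr0]
      have hx2sq : ∀ k : ℕ, (Real.sqrt r ^ k) ^ 2 = r ^ k := fun k => by
        rw [pow_two]; exact hx2 k
      have hTsummand : Summable (fun k : ℕ => ((n + 1 + k : ℕ) : ℝ) * ‖a (n + 1 + k)‖ * r ^ k) :=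
        Summable.of_nonneg_of_le (fun k => by positivity)
          (fun k => mul_le_mul_of_nonneg_right (hma _) (by positivity))
          (hgeo.mul_left (Real.sqrt S))
      set T : ℝ := ∑' k : ℕ, ((n + 1 + k : ℕ) : ℝ) * ‖a (n + 1 + k)‖ * r ^ k with hTdef
      have hstep1 : (n : ℝ) * ‖b n‖ ≤ T := by
        calc (n : ℝ) * ‖b n‖ ≤ (n : ℝ) * ∑' k : ℕ, ‖a (n+1+k)‖ * r ^ k :=
              mul_le_mul_of_nonneg_left (hbnorm n) (by positivity)
          _ = ∑' k : ℕ, (n : ℝ) * (‖a (n+1+k)‖ * r ^ k) := (tsum_mul_left).symm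
          _ ≤ T := by
              refine Summable.tsum_le_tsum (fun k => ?_) ((hsumtail n).mul_left _) hTsummand
              have hle : (n : ℝ) ≤ ((n + 1 + k : ℕ) : ℝ) := by
                exact_mod_cast (by omega : n ≤ n + 1 + k)
              calc (n : ℝ) * (‖a (n+1+k)‖ * r ^ k)
                  = ((n : ℝ) * ‖a (n+1+k)‖) * r ^ k := by ring
                _ ≤ (((n + 1 + k : ℕ) : ℝ) * ‖a (n+1+k)‖) * r ^ k :=
                    mul_le_mul_of_nonneg_right
                      (mul_le_mul_of_nonneg_right hle (norm_nonneg _)) (pow_nonneg hr0 k)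
      have hT0 : 0 ≤ T := tsum_nonneg (fun k => by positivity)
      have hsq : T ^ 2 ≤ (1 - r)⁻¹ * v n := by
        have e1 : T = ∑' k : ℕ, Real.sqrt r ^ k *
            (((n + 1 + k : ℕ) : ℝ) * ‖a (n + 1 + k)‖ * Real.sqrt r ^ k) := by
          rw [hTdef]
          refine tsum_congr fun k => ?_
          rw [show Real.sqrt r ^ k * (((n + 1 + k : ℕ) : ℝ) * ‖a (n + 1 + k)‖ * Real.sqrt r ^ k)
            = ((n + 1 + k : ℕ) : ℝ) * ‖a (n + 1 + k)‖ * (Real.sqrt r ^ k * Real.sqrt r ^ k)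
            from by ring, hx2 k]
        have hxs : (∑' k : ℕ, (Real.sqrt r ^ k) ^ 2) = (1 - r)⁻¹ := by
          rw [tsum_congr hx2sq]
          exact tsum_geometric_of_lt_one hr0 hr1
        have hyeq : ∀ k : ℕ, (((n + 1 + k : ℕ) : ℝ) * ‖a (n + 1 + k)‖ * Real.sqrt r ^ k) ^ 2
            = (((n + 1 + k : ℕ) : ℝ))^2 * ‖a (n + 1 + k)‖^2 * r ^ k := fun k => by
          rw [show (((n + 1 + k : ℕ) : ℝ) * ‖a (n + 1 + k)‖ * Real.sqrt r ^ k) ^ 2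
            = (((n + 1 + k : ℕ) : ℝ))^2 * ‖a (n + 1 + k)‖^2 * ((Real.sqrt r ^ k) ^ 2)
            from by ring, hx2sq k]
        have hys : (∑' k : ℕ, (((n + 1 + k : ℕ) : ℝ) * ‖a (n + 1 + k)‖ * Real.sqrt r ^ k) ^ 2)
            = v n := tsum_congr hyeq
        calc T ^ 2 = (∑' k : ℕ, Real.sqrt r ^ k *
              (((n + 1 + k : ℕ) : ℝ) * ‖a (n + 1 + k)‖ * Real.sqrt r ^ k)) ^ 2 := by rw [e1]
          _ ≤ (∑' k : ℕ, (Real.sqrt r ^ k) ^ 2) *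
              (∑' k : ℕ, (((n + 1 + k : ℕ) : ℝ) * ‖a (n + 1 + k)‖ * Real.sqrt r ^ k) ^ 2) :=
              tsum_cauchy_schwarz _ _ (fun k => by positivity) (fun k => by positivity)
                (hgeo.congr fun k => (hx2sq k).symm)
                ((hFfiber n).congr fun k => (hyeq k).symm)
          _ = (1 - r)⁻¹ * v n := by rw [hxs, hys]
      calc ((n : ℝ))^2 * ‖b n‖^2 = ((n : ℝ) * ‖b n‖)^2 := by ring
        _ ≤ T ^ 2 := by
            have h0 : 0 ≤ (n : ℝ) * ‖b n‖ := by positivity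
            nlinarith
        _ ≤ (1 - r)⁻¹ * v n := hsq
    have hbsum : Summable (fun n : ℕ => ((n : ℝ))^2 * ‖b n‖^2) :=
      Summable.of_nonneg_of_le (fun n => by positivity) hkey (hvsum.mul_left _)
    have hid : ∀ z ∈ ball (0:ℂ) 1, f z = (z - w) * g z := by
      intro z hz
      have hgz := hgsum z hz
      have h1 : HasSum (fun n : ℕ => b n * z ^ (n + 1)) (g z * z) := by
        have h := hgz.mul_right z
        have heq : (fun n : ℕ => b n * z ^ n * z) = fun n : ℕ => b n * z ^ (n + 1) := by
          funext n; rw [pow_succ]; ring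
        rwa [heq] at h
      have h2 : HasSum (fun n : ℕ => b (n + 1) * z ^ (n + 1)) (g z - b 0 * z ^ 0) := by
        refine (hasSum_nat_add_iff (f := fun n : ℕ => b n * z ^ n) 1).mpr ?_
        have hval : g z - b 0 * z ^ 0 + ∑ i ∈ Finset.range 1, b i * z ^ i = g z := by simp
        rw [hval]
        exact hgz
      have h3 := h1.sub (h2.mul_left w)
      have h4 : HasSum (fun n : ℕ => a (n + 1) * z ^ (n + 1))
          (g z * z - w * (g z - b 0 * z ^ 0)) := by
        have heq : (fun n : ℕ => a (n + 1) * z ^ (n + 1))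
            = fun n : ℕ => b n * z ^ (n + 1) - w * (b (n + 1) * z ^ (n + 1)) := by
          funext n; rw [hrec n]; ring
        rw [heq]
        exact h3
      have h5 : HasSum (fun n : ℕ => a n * z ^ n)
          (g z * z - w * (g z - b 0 * z ^ 0) + ∑ i ∈ Finset.range 1, a i * z ^ i) :=
        (hasSum_nat_add_iff (f := fun n : ℕ => a n * z ^ n) 1).mp h4
      have h6 := (hfs z hz).unique h5
      rw [h6]
      simp only [Finset.range_one, Finset.sum_singleton, pow_zero, mul_one]
      linear_combination hfw'
    exact ⟨g, ⟨hganal, fun z hz => by simpa only [hcoeff] using hgsum z hz,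
      by simpa only [hcoeff] using hbsum⟩, hid⟩
  · rintro ⟨g, hg, hgf⟩
    rw [hgf w hw]
    ring
end

section
/- The multiplication operator M_ψ (given by M_ψ f = ψ f) is bounded on S^2 if and only if ψ ∈ S^2. -/
open Metric Filter

/-! ### Auxiliary lemmas -/

open Finset in
/-- Extracting Taylor coefficients from a power series representation. -/
lemma taylorCoeff_eq_of_hasSum_s11 (g : ℂ → ℂ) (c : ℕ → ℂ)
    (hsum : Summable fun n => ‖c n‖)
    (hg : ∀ z ∈ ball (0:ℂ) 1, HasSum (fun n => c n * z ^ n) (g z)) :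
    ∀ n, taylorCoeff g n = c n := by
  set p : FormalMultilinearSeries ℂ ℂ ℂ := FormalMultilinearSeries.ofScalars ℂ c with hp
  have happ : ∀ (n : ℕ) (y : ℂ), p n (fun _ => y) = c n * y ^ n := by
    intro n y
    simp [hp, FormalMultilinearSeries.ofScalars, smul_eq_mul, List.prod_ofFn]
  have hnorm : ∀ n, ‖p n‖ = ‖c n‖ := fun n =>
    FormalMultilinearSeries.ofScalars_norm ℂ c n
  have hrad : (1 : ENNReal) ≤ p.radius := by
    have : Summable fun n => ‖p n‖ * ((1:NNReal):ℝ) ^ n := by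
      simp only [hnorm, NNReal.coe_one, one_pow, mul_one]; exact hsum
    simpa using p.le_radius_of_summable this
  have hball : HasFPowerSeriesOnBall g p 0 1 := by
    refine ⟨hrad, one_pos, ?_⟩
    intro y hy
    rw [EMetric.mem_ball, edist_zero_right] at hy
    have hy' : y ∈ ball (0:ℂ) 1 := by
      rw [mem_ball, dist_zero_right]
      have h2 : (‖y‖₊ : ENNReal) < 1 := hy
      have := ENNReal.coe_lt_coe.mp (by simpa using h2)
      exact_mod_cast this
    simpa [happ, zero_add] using hg y hy'
  intro n
  have := hball.factorial_smul (1:ℂ) n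
  rw [happ, one_pow, mul_one, ← iteratedDeriv_eq_iteratedFDeriv, nsmul_eq_mul] at this
  rw [taylorCoeff, ← this]
  exact mul_div_cancel_left₀ _ (by exact_mod_cast n.factorial_ne_zero)

/-- Cauchy–Schwarz for infinite sums of nonnegative reals. -/
lemma cs_tsum (u v : ℕ → ℝ) (hu : ∀ n, 0 ≤ u n) (hv : ∀ n, 0 ≤ v n)
    (hu2 : Summable fun n => u n ^ 2) (hv2 : Summable fun n => v n ^ 2) :
    Summable (fun n => u n * v n) ∧
      ∑' n : ℕ, u n * v n ≤ Real.sqrt (∑' n : ℕ, u n ^ 2) * Real.sqrt (∑' n : ℕ, v n ^ 2) := by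
  have hsum : Summable (fun n => u n * v n) := by
    refine Summable.of_nonneg_of_le (fun n => mul_nonneg (hu n) (hv n))
      (fun n => ?_) ((hu2.add hv2).div_const 2)
    nlinarith [sq_nonneg (u n - v n)]
  refine ⟨hsum, Summable.tsum_le_of_sum_le hsum fun s => ?_⟩
  have h1 : (∑ i ∈ s, u i * v i) ^ 2 ≤ (∑ i ∈ s, u i ^ 2) * ∑ i ∈ s, v i ^ 2 :=
    Finset.sum_mul_sq_le_sq_mul_sq s u v
  have h2 : (∑ i ∈ s, u i ^ 2) * ∑ i ∈ s, v i ^ 2 ≤ (∑' n : ℕ, u n ^ 2) * ∑' n : ℕ, v n ^ 2 := by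
    apply mul_le_mul (Summable.sum_le_tsum s (fun i _ => sq_nonneg _) hu2)
      (Summable.sum_le_tsum s (fun i _ => sq_nonneg _) hv2)
      (Finset.sum_nonneg fun i _ => sq_nonneg _) (tsum_nonneg fun i => sq_nonneg _)
  have h3 : (0:ℝ) ≤ ∑ i ∈ s, u i * v i :=
    Finset.sum_nonneg fun i _ => mul_nonneg (hu i) (hv i)
  calc ∑ i ∈ s, u i * v i ≤ Real.sqrt ((∑' n : ℕ, u n ^ 2) * ∑' n : ℕ, v n ^ 2) := by
        rw [show (∑ i ∈ s, u i * v i) = Real.sqrt ((∑ i ∈ s, u i * v i)^2) by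
          rw [Real.sqrt_sq h3]]
        exact Real.sqrt_le_sqrt (h1.trans h2)
    _ = _ := Real.sqrt_mul (tsum_nonneg fun i => sq_nonneg _) _

open Finset in
/-- Young's inequality `‖x ⋆ y‖_{ℓ²} ≤ ‖x‖_{ℓ²} ‖y‖_{ℓ¹}` for nonnegative sequences. -/
lemma young_l2_l1 (x y : ℕ → ℝ) (hy0 : ∀ n, 0 ≤ y n)
    (hx : Summable fun n => x n ^ 2) (hy : Summable y) :
    Summable (fun n => (∑ k ∈ range (n+1), x k * y (n-k)) ^ 2) ∧
      ∑' n : ℕ, (∑ k ∈ range (n+1), x k * y (n-k)) ^ 2 ≤ (∑' n : ℕ, x n ^ 2) * (∑' n : ℕ, y n) ^ 2 := by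
  set S := ∑' n : ℕ, y n with hS
  have hS0 : 0 ≤ S := tsum_nonneg hy0
  have hxn : Summable fun n => ‖x n ^ 2‖ := by
    refine hx.congr fun n => ?_
    rw [Real.norm_eq_abs, abs_of_nonneg (sq_nonneg _)]
  have hyn : Summable fun n => ‖y n‖ := by
    refine hy.congr fun n => ?_
    rw [Real.norm_eq_abs, abs_of_nonneg (hy0 _)]
  set h : ℕ → ℝ := fun n => ∑ k ∈ range (n+1), x k ^ 2 * y (n-k) with hh
  have hhsum : Summable h := (summable_norm_sum_mul_range_of_summable_norm hxn hyn).of_norm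
  have hhts : ∑' n : ℕ, h n = (∑' n : ℕ, x n ^ 2) * S :=
    (tsum_mul_tsum_eq_tsum_sum_range_of_summable_norm hxn hyn).symm
  have key : ∀ n, (∑ k ∈ range (n+1), x k * y (n-k)) ^ 2 ≤ S * h n := by
    intro n
    have hcs : (∑ k ∈ range (n+1), (x k * Real.sqrt (y (n-k))) * Real.sqrt (y (n-k))) ^ 2
        ≤ (∑ k ∈ range (n+1), (x k * Real.sqrt (y (n-k))) ^ 2) *
          ∑ k ∈ range (n+1), Real.sqrt (y (n-k)) ^ 2 :=
      Finset.sum_mul_sq_le_sq_mul_sq _ _ _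
    have e1 : ∀ k ∈ range (n+1), (x k * Real.sqrt (y (n-k))) * Real.sqrt (y (n-k))
        = x k * y (n-k) := by
      intro k _; rw [mul_assoc, Real.mul_self_sqrt (hy0 _)]
    have e2 : ∀ k ∈ range (n+1), (x k * Real.sqrt (y (n-k))) ^ 2 = x k ^ 2 * y (n-k) := by
      intro k _; rw [mul_pow, Real.sq_sqrt (hy0 _)]
    have e3 : ∀ k ∈ range (n+1), Real.sqrt (y (n-k)) ^ 2 = y (n-k) := by
      intro k _; rw [Real.sq_sqrt (hy0 _)]
    rw [Finset.sum_congr rfl e1, Finset.sum_congr rfl e2, Finset.sum_congr rfl e3] at hcs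
    have e4 : ∑ k ∈ range (n+1), y (n-k) = ∑ k ∈ range (n+1), y k := by
      have := Finset.sum_range_reflect y (n+1)
      simpa using this
    have e5 : ∑ k ∈ range (n+1), y k ≤ S := Summable.sum_le_tsum _ (fun i _ => hy0 i) hy
    calc (∑ k ∈ range (n+1), x k * y (n-k)) ^ 2
        ≤ h n * ∑ k ∈ range (n+1), y (n-k) := hcs
      _ ≤ h n * S := by
          apply mul_le_mul_of_nonneg_left (e4 ▸ e5)
          exact Finset.sum_nonneg fun k _ => mul_nonneg (sq_nonneg _) (hy0 _)
      _ = S * h n := mul_comm _ _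
  have hsum2 : Summable (fun n => (∑ k ∈ range (n+1), x k * y (n-k)) ^ 2) :=
    Summable.of_nonneg_of_le (fun n => sq_nonneg _) key (hhsum.mul_left S)
  refine ⟨hsum2, ?_⟩
  calc ∑' n : ℕ, (∑ k ∈ range (n+1), x k * y (n-k)) ^ 2
      ≤ ∑' n : ℕ, S * h n := Summable.tsum_le_tsum key hsum2 (hhsum.mul_left S)
    _ = S * ((∑' n : ℕ, x n ^ 2) * S) := by rw [tsum_mul_left, hhts]
    _ = (∑' n : ℕ, x n ^ 2) * S ^ 2 := by ring

open Finset in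
lemma conv_flip (u v : ℕ → ℝ) (n : ℕ) :
    ∑ k ∈ range (n+1), u k * v (n-k) = ∑ k ∈ range (n+1), v k * u (n-k) := by
  rw [← Finset.sum_range_reflect (fun k => v k * u (n-k)) (n+1)]
  apply Finset.sum_congr rfl
  intro j hj
  rw [mem_range, Nat.lt_succ_iff] at hj
  have h1 : n + 1 - 1 - j = n - j := by omega
  rw [h1, Nat.sub_sub_self hj, mul_comm]

noncomputable def Bconst : ℝ := Real.sqrt (∑' n : ℕ, (1 / ((n:ℝ)+1)) ^ 2)

lemma Bconst_summable : Summable (fun n : ℕ => (1 / ((n:ℝ)+1)) ^ 2) := by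
  have h1 : Summable (fun n : ℕ => 1 / (n:ℝ) ^ 2) :=
    Real.summable_one_div_nat_pow.mpr one_lt_two
  have h2 := (summable_nat_add_iff 1).mpr h1
  refine h2.congr fun n => ?_
  push_cast
  rw [div_pow, one_pow]

lemma Bconst_nonneg : 0 ≤ Bconst := Real.sqrt_nonneg _

/-- Basic consequences of square-summability of `n aₙ`. -/
lemma seq_facts (a : ℕ → ℂ) (hsum : Summable fun n : ℕ => ((n:ℝ))^2 * ‖a n‖^2) :
    Summable (fun n : ℕ => ‖a n‖) ∧
    (∑' n : ℕ, ‖a n‖) ≤ (1 + Bconst) *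
      Real.sqrt (‖a 0‖^2 + ∑' n : ℕ, ((n:ℝ)+1)^2 * ‖a (n+1)‖^2) ∧
    (∑' n : ℕ, ((n:ℝ))^2 * ‖a n‖^2)
      ≤ ‖a 0‖^2 + ∑' n : ℕ, ((n:ℝ)+1)^2 * ‖a (n+1)‖^2 := by
  set T := ∑' n : ℕ, ((n:ℝ)+1)^2 * ‖a (n+1)‖^2 with hT
  have htail : Summable (fun n : ℕ => ((n:ℝ)+1)^2 * ‖a (n+1)‖^2) := by
    refine ((summable_nat_add_iff 1).mpr hsum).congr fun n => ?_
    push_cast; ring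
  have hT0 : 0 ≤ T := tsum_nonneg fun n => mul_nonneg (sq_nonneg _) (sq_nonneg _)
  set Sq := ‖a 0‖^2 + T with hSq
  have hSq0 : 0 ≤ Sq := add_nonneg (sq_nonneg _) hT0
  -- Cauchy-Schwarz for the ℓ¹ bound on the tail
  have hcs := cs_tsum (fun n => 1 / ((n:ℝ)+1)) (fun n => ((n:ℝ)+1) * ‖a (n+1)‖)
    (fun n => by positivity) (fun n => by positivity)
    Bconst_summable
    (by refine htail.congr fun n => ?_; rw [mul_pow])
  have huv : ∀ n : ℕ, (1 / ((n:ℝ)+1)) * (((n:ℝ)+1) * ‖a (n+1)‖) = ‖a (n+1)‖ := by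
    intro n
    have : ((n:ℝ)+1) ≠ 0 := by positivity
    field_simp
  have htailsum : Summable (fun n => ‖a (n+1)‖) := hcs.1.congr huv
  have hasum : Summable (fun n => ‖a n‖) := (summable_nat_add_iff 1).mp htailsum
  refine ⟨hasum, ?_, ?_⟩
  · -- ℓ¹ bound
    have hts : ∑' n : ℕ, ‖a n‖ = ‖a 0‖ + ∑' n : ℕ, ‖a (n+1)‖ := Summable.tsum_eq_zero_add hasum
    have h2 : ∑' n : ℕ, ‖a (n+1)‖ ≤ Bconst * Real.sqrt T := by
      have := hcs.2
      rw [tsum_congr huv] at this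
      refine this.trans ?_
      apply mul_le_mul_of_nonneg_left _ Bconst_nonneg |>.trans_eq rfl
      · exact le_of_eq (by rw [tsum_congr (fun n : ℕ => (mul_pow ((n:ℝ)+1) ‖a (n+1)‖ 2))])
    have h3 : ‖a 0‖ ≤ Real.sqrt Sq := by
      rw [show ‖a 0‖ = Real.sqrt (‖a 0‖^2) by rw [Real.sqrt_sq (norm_nonneg _)]]
      exact Real.sqrt_le_sqrt (by simp [hSq, hT0])
    have h4 : Real.sqrt T ≤ Real.sqrt Sq :=
      Real.sqrt_le_sqrt (by simp [hSq, sq_nonneg])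
    calc ∑' n : ℕ, ‖a n‖ = ‖a 0‖ + ∑' n : ℕ, ‖a (n+1)‖ := hts
      _ ≤ Real.sqrt Sq + Bconst * Real.sqrt Sq := by
          refine add_le_add h3 (h2.trans ?_)
          exact mul_le_mul_of_nonneg_left h4 Bconst_nonneg
      _ = (1 + Bconst) * Real.sqrt Sq := by ring
  · -- ℓ² bound
    have hts : ∑' n : ℕ, ((n:ℝ))^2 * ‖a n‖^2
        = (0:ℝ)^2 * ‖a 0‖^2 + ∑' n : ℕ, (((n+1:ℕ)):ℝ)^2 * ‖a (n+1)‖^2 := by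
      simpa using Summable.tsum_eq_zero_add hsum
    rw [hts]
    have : ∑' n : ℕ, (((n+1:ℕ)):ℝ)^2 * ‖a (n+1)‖^2 = T := by
      rw [hT]; exact tsum_congr fun n => by push_cast; ring
    rw [this]
    simp [hSq, sq_nonneg]


lemma memS2_one : MemS2 (fun _ => (1:ℂ)) := by
  have hc : ∀ n, taylorCoeff (fun _ => (1:ℂ)) n = if n = 0 then 1 else 0 := by
    apply taylorCoeff_eq_of_hasSum_s11
    · apply summable_of_ne_finset_zero (s := ({0} : Finset ℕ))
      intro n hn
      simp only [Finset.mem_singleton] at hn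
      simp [hn]
    · intro z _
      have h : HasSum (fun n : ℕ => (if n = 0 then (1:ℂ) else 0) * z ^ n)
          ((if (0:ℕ) = 0 then (1:ℂ) else 0) * z ^ 0) :=
        hasSum_single 0 (fun b hb => by simp [hb])
      simpa using h
  refine ⟨analyticOn_const, ?_, ?_⟩
  · intro z _
    have h : HasSum (fun n : ℕ => taylorCoeff (fun _ => (1:ℂ)) n * z ^ n)
        (taylorCoeff (fun _ => (1:ℂ)) 0 * z ^ 0) :=
      hasSum_single 0 (fun b hb => by simp [hc b, hb])
    simpa [hc 0] using h
  · have h : (fun n : ℕ => ((n:ℝ))^2 * ‖taylorCoeff (fun _ => (1:ℂ)) n‖^2)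
        = fun _ => (0:ℝ) := by
      funext n
      cases n with
      | zero => simp
      | succ m => simp [hc (m+1)]
    rw [h]
    exact summable_zero

noncomputable def multConst (ψ : ℂ → ℂ) : ℝ :=
  Real.sqrt (‖taylorCoeff ψ 0‖^2
    + 2 * (∑' n : ℕ, ((n:ℝ))^2 * ‖taylorCoeff ψ n‖^2) * (1+Bconst)^2
    + 2 * (∑' n : ℕ, ‖taylorCoeff ψ n‖)^2)

open Finset in
lemma key_mul (ψ f : ℂ → ℂ) (hψa : AnalyticOn ℂ ψ (ball (0:ℂ) 1)) (hψm : MemS2 ψ)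
    (hfm : MemS2 f) :
    MemS2 (fun z => ψ z * f z) ∧
      s2Norm (fun z => ψ z * f z) ≤ multConst ψ * s2Norm f := by
  obtain ⟨_, hψs, hψsum⟩ := hψm
  obtain ⟨hfa, hfs, hfsum⟩ := hfm
  set b : ℕ → ℂ := taylorCoeff ψ with hb
  set a : ℕ → ℂ := taylorCoeff f with ha
  obtain ⟨hbl1, hbl1_bound, hbl2_bound⟩ := seq_facts b hψsum
  obtain ⟨hal1, hal1_bound, hal2_bound⟩ := seq_facts a hfsum
  set c : ℕ → ℂ := fun n => ∑ k ∈ range (n+1), b k * a (n-k) with hcdef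
  have hcn : Summable fun n => ‖c n‖ :=
    summable_norm_sum_mul_range_of_summable_norm hbl1 hal1
  -- the product has the Cauchy product power series on the disk
  have hprod : ∀ z ∈ ball (0:ℂ) 1, HasSum (fun n => c n * z ^ n) (ψ z * f z) := by
    intro z hz
    have hz1 : ‖z‖ < 1 := by rwa [mem_ball, dist_zero_right] at hz
    have hzpow : ∀ n : ℕ, ‖z‖ ^ n ≤ 1 := fun n => pow_le_one₀ (norm_nonneg z) hz1.le
    have hFn : Summable fun n => ‖b n * z ^ n‖ := by
      refine Summable.of_nonneg_of_le (fun n => norm_nonneg _) (fun n => ?_) hbl1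
      rw [norm_mul, norm_pow]
      calc ‖b n‖ * ‖z‖^n ≤ ‖b n‖ * 1 :=
            mul_le_mul_of_nonneg_left (hzpow n) (norm_nonneg _)
        _ = ‖b n‖ := mul_one _
    have hGn : Summable fun n => ‖a n * z ^ n‖ := by
      refine Summable.of_nonneg_of_le (fun n => norm_nonneg _) (fun n => ?_) hal1
      rw [norm_mul, norm_pow]
      calc ‖a n‖ * ‖z‖^n ≤ ‖a n‖ * 1 :=
            mul_le_mul_of_nonneg_left (hzpow n) (norm_nonneg _)
        _ = ‖a n‖ := mul_one _
    have h := hasSum_sum_range_mul_of_summable_norm hFn hGn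
    rw [(hψs z hz).tsum_eq, (hfs z hz).tsum_eq] at h
    have hfun : (fun n => ∑ k ∈ range (n+1), (b k * z^k) * (a (n-k) * z^(n-k)))
        = fun n => c n * z ^ n := by
      funext n
      rw [hcdef]
      rw [Finset.sum_mul]
      apply Finset.sum_congr rfl
      intro k hk
      rw [mem_range, Nat.lt_succ_iff] at hk
      have hzz : z ^ k * z ^ (n-k) = z ^ n := by
        rw [← pow_add, Nat.add_sub_cancel' hk]
      calc (b k * z^k) * (a (n-k) * z^(n-k)) = b k * a (n-k) * (z^k * z^(n-k)) := by ring
        _ = b k * a (n-k) * z^n := by rw [hzz]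
    rwa [hfun] at h
  have htay : ∀ n, taylorCoeff (fun z => ψ z * f z) n = c n :=
    taylorCoeff_eq_of_hasSum_s11 _ c hcn hprod
  -- quantitative estimates
  set x1 : ℕ → ℝ := fun k => (k:ℝ) * ‖b k‖ with hx1def
  set y1 : ℕ → ℝ := fun k => ‖a k‖ with hy1def
  set x2 : ℕ → ℝ := fun k => (k:ℝ) * ‖a k‖ with hx2def
  set y2 : ℕ → ℝ := fun k => ‖b k‖ with hy2def
  have hx1 : Summable fun n => x1 n ^ 2 :=
    hψsum.congr fun n => by rw [hx1def]; simp [mul_pow]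
  have hx2 : Summable fun n => x2 n ^ 2 :=
    hfsum.congr fun n => by rw [hx2def]; simp [mul_pow]
  obtain ⟨hPs, hPb⟩ := young_l2_l1 x1 y1 (fun n => norm_nonneg _) hx1 hal1
  obtain ⟨hQs, hQb⟩ := young_l2_l1 x2 y2 (fun n => norm_nonneg _) hx2 hbl1
  have hP0 : ∀ n : ℕ, 0 ≤ ∑ k ∈ range (n+1), x1 k * y1 (n-k) := fun n =>
    Finset.sum_nonneg fun k _ => mul_nonneg (by positivity) (norm_nonneg _)
  have hQ0 : ∀ n : ℕ, 0 ≤ ∑ k ∈ range (n+1), x2 k * y2 (n-k) := fun n =>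
    Finset.sum_nonneg fun k _ => mul_nonneg (by positivity) (norm_nonneg _)
  have key1 : ∀ n : ℕ, (n:ℝ) * ‖c n‖ ≤
      (∑ k ∈ range (n+1), x1 k * y1 (n-k)) + ∑ k ∈ range (n+1), x2 k * y2 (n-k) := by
    intro n
    have hsplit : (n:ℂ) * c n = (∑ k ∈ range (n+1), (k:ℂ) * (b k * a (n-k)))
        + ∑ k ∈ range (n+1), ((n-k:ℕ):ℂ) * (b k * a (n-k)) := by
      rw [hcdef, Finset.mul_sum, ← Finset.sum_add_distrib]
      apply Finset.sum_congr rfl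
      intro k hk
      rw [mem_range, Nat.lt_succ_iff] at hk
      have hcast : ((n:ℂ)) = (k:ℂ) + ((n-k:ℕ):ℂ) := by
        rw [← Nat.cast_add, Nat.add_sub_cancel' hk]
      rw [hcast]; ring
    have heq : (n:ℝ) * ‖c n‖ = ‖(n:ℂ) * c n‖ := by
      rw [norm_mul, Complex.norm_natCast]
    rw [heq, hsplit]
    refine (norm_add_le _ _).trans (add_le_add ?_ ?_)
    · refine (norm_sum_le _ _).trans (le_of_eq ?_)
      apply Finset.sum_congr rfl
      intro k _
      rw [norm_mul, norm_mul, Complex.norm_natCast, hx1def, hy1def]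
      ring
    · refine (norm_sum_le _ _).trans (le_of_eq ?_)
      rw [conv_flip x2 y2 n]
      apply Finset.sum_congr rfl
      intro k _
      rw [norm_mul, norm_mul, Complex.norm_natCast, hx2def, hy2def]
      ring
  have hGc : ∀ n : ℕ, (n:ℝ)^2 * ‖c n‖^2 ≤
      2 * (∑ k ∈ range (n+1), x1 k * y1 (n-k))^2
        + 2 * (∑ k ∈ range (n+1), x2 k * y2 (n-k))^2 := by
    intro n
    have h1 := key1 n
    have h2 : (0:ℝ) ≤ (n:ℝ) * ‖c n‖ := mul_nonneg (Nat.cast_nonneg n) (norm_nonneg _)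
    nlinarith [hP0 n, hQ0 n, sq_nonneg ((∑ k ∈ range (n+1), x1 k * y1 (n-k))
      - ∑ k ∈ range (n+1), x2 k * y2 (n-k))]
  have hsum2PQ : Summable (fun n => 2 * (∑ k ∈ range (n+1), x1 k * y1 (n-k))^2
      + 2 * (∑ k ∈ range (n+1), x2 k * y2 (n-k))^2) :=
    (hPs.mul_left 2).add (hQs.mul_left 2)
  have hGcsum : Summable (fun n : ℕ => (n:ℝ)^2 * ‖c n‖^2) :=
    Summable.of_nonneg_of_le (fun n => by positivity) hGc hsum2PQ
  have hGcbound : ∑' n : ℕ, (n:ℝ)^2 * ‖c n‖^2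
      ≤ 2 * ((∑' n : ℕ, x1 n ^ 2) * (∑' n : ℕ, y1 n)^2)
        + 2 * ((∑' n : ℕ, x2 n ^ 2) * (∑' n : ℕ, y2 n)^2) := by
    calc ∑' n : ℕ, (n:ℝ)^2 * ‖c n‖^2
        ≤ ∑' n : ℕ, (2 * (∑ k ∈ range (n+1), x1 k * y1 (n-k))^2
            + 2 * (∑ k ∈ range (n+1), x2 k * y2 (n-k))^2) :=
          Summable.tsum_le_tsum hGc hGcsum hsum2PQ
      _ = 2 * (∑' n : ℕ, (∑ k ∈ range (n+1), x1 k * y1 (n-k))^2)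
            + 2 * (∑' n : ℕ, (∑ k ∈ range (n+1), x2 k * y2 (n-k))^2) := by
          rw [Summable.tsum_add (hPs.mul_left 2) (hQs.mul_left 2), tsum_mul_left, tsum_mul_left]
      _ ≤ _ := add_le_add (mul_le_mul_of_nonneg_left hPb (by norm_num))
            (mul_le_mul_of_nonneg_left hQb (by norm_num))
  have hmem : MemS2 (fun z => ψ z * f z) := by
    refine ⟨hψa.mul hfa, ?_, ?_⟩
    · intro z hz
      simp only [htay]
      exact hprod z hz
    · refine hGcsum.congr fun n => ?_
      rw [htay]
  refine ⟨hmem, ?_⟩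
  -- translate tsums
  have hNb : ∑' n : ℕ, x1 n ^ 2 = ∑' n : ℕ, ((n:ℝ))^2 * ‖b n‖^2 :=
    tsum_congr fun n => by rw [hx1def]; simp [mul_pow]
  have hNa : ∑' n : ℕ, x2 n ^ 2 = ∑' n : ℕ, ((n:ℝ))^2 * ‖a n‖^2 :=
    tsum_congr fun n => by rw [hx2def]; simp [mul_pow]
  set Nb := ∑' n : ℕ, ((n:ℝ))^2 * ‖b n‖^2 with hNbdef
  set Na := ∑' n : ℕ, ((n:ℝ))^2 * ‖a n‖^2 with hNadef
  set L1b := ∑' n : ℕ, ‖b n‖ with hL1bdef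
  set L1a := ∑' n : ℕ, ‖a n‖ with hL1adef
  have hSf : s2NormSq f = ‖a 0‖^2 + ∑' n : ℕ, ((n:ℝ)+1)^2 * ‖a (n+1)‖^2 := rfl
  have hSf0 : 0 ≤ s2NormSq f := by
    rw [hSf]
    exact add_nonneg (sq_nonneg _)
      (tsum_nonneg fun n => mul_nonneg (sq_nonneg _) (sq_nonneg _))
  -- s2NormSq of the product
  have hc0 : c 0 = b 0 * a 0 := by rw [hcdef]; simp
  have htail_c : ∑' n : ℕ, ((n:ℝ)+1)^2 * ‖c (n+1)‖^2 = ∑' n : ℕ, (n:ℝ)^2 * ‖c n‖^2 := by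
    have h := Summable.tsum_eq_zero_add hGcsum
    simp only [Nat.cast_zero] at h
    rw [h]
    have : ∑' n : ℕ, (((n:ℕ)+1:ℕ):ℝ)^2 * ‖c (n+1)‖^2
        = ∑' n : ℕ, ((n:ℝ)+1)^2 * ‖c (n+1)‖^2 :=
      tsum_congr fun n => by push_cast; ring
    rw [this]
    ring
  have hSg : s2NormSq (fun z => ψ z * f z) = ‖c 0‖^2 + ∑' n : ℕ, (n:ℝ)^2 * ‖c n‖^2 := by
    rw [s2NormSq, htay 0, ← htail_c]
    congr 1
    exact tsum_congr fun n => by rw [htay]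
  -- numeric bounds
  have hL1a_sq : L1a^2 ≤ (1+Bconst)^2 * s2NormSq f := by
    have h1 : L1a ≤ (1+Bconst) * Real.sqrt (s2NormSq f) := by
      rw [hSf]; exact hal1_bound
    have h2 : (0:ℝ) ≤ L1a := tsum_nonneg fun n => norm_nonneg _
    calc L1a^2 ≤ ((1+Bconst) * Real.sqrt (s2NormSq f))^2 := by
          exact pow_le_pow_left₀ h2 h1 2
      _ = (1+Bconst)^2 * s2NormSq f := by
          rw [mul_pow, Real.sq_sqrt hSf0]
  have hNa_le : Na ≤ s2NormSq f := by rw [hSf]; exact hal2_bound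
  have ha0_le : ‖a 0‖^2 ≤ s2NormSq f := by
    rw [hSf]
    have : (0:ℝ) ≤ ∑' n : ℕ, ((n:ℝ)+1)^2 * ‖a (n+1)‖^2 :=
      tsum_nonneg fun n => mul_nonneg (sq_nonneg _) (sq_nonneg _)
    linarith
  have hNb0 : 0 ≤ Nb := tsum_nonneg fun n => mul_nonneg (sq_nonneg _) (sq_nonneg _)
  have hL1b0 : 0 ≤ L1b := tsum_nonneg fun n => norm_nonneg _
  have hmain : s2NormSq (fun z => ψ z * f z)
      ≤ (‖b 0‖^2 + 2 * Nb * (1+Bconst)^2 + 2 * L1b^2) * s2NormSq f := by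
    rw [hSg]
    have hb0a0 : ‖c 0‖^2 = ‖b 0‖^2 * ‖a 0‖^2 := by
      rw [hc0, norm_mul, mul_pow]
    rw [hb0a0]
    have hGb' : ∑' n : ℕ, (n:ℝ)^2 * ‖c n‖^2 ≤ 2 * (Nb * L1a^2) + 2 * (Na * L1b^2) := by
      have := hGcbound
      rwa [hNb, hNa] at this
    have t1 : ‖b 0‖^2 * ‖a 0‖^2 ≤ ‖b 0‖^2 * s2NormSq f :=
      mul_le_mul_of_nonneg_left ha0_le (sq_nonneg _)
    have t2 : 2 * (Nb * L1a^2) ≤ 2 * (Nb * ((1+Bconst)^2 * s2NormSq f)) := by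
      have := mul_le_mul_of_nonneg_left hL1a_sq hNb0
      linarith
    have t3 : 2 * (Na * L1b^2) ≤ 2 * (s2NormSq f * L1b^2) := by
      have := mul_le_mul_of_nonneg_right hNa_le (sq_nonneg L1b)
      linarith
    nlinarith [t1, t2, t3]
  -- conclude by taking square roots
  have hCsq0 : 0 ≤ ‖b 0‖^2 + 2 * Nb * (1+Bconst)^2 + 2 * L1b^2 := by positivity
  rw [s2Norm, s2Norm]
  calc Real.sqrt (s2NormSq (fun z => ψ z * f z))
      ≤ Real.sqrt ((‖b 0‖^2 + 2 * Nb * (1+Bconst)^2 + 2 * L1b^2) * s2NormSq f) :=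
        Real.sqrt_le_sqrt hmain
    _ = Real.sqrt (‖b 0‖^2 + 2 * Nb * (1+Bconst)^2 + 2 * L1b^2) *
          Real.sqrt (s2NormSq f) := Real.sqrt_mul hCsq0 _
    _ = multConst ψ * Real.sqrt (s2NormSq f) := by rw [multConst]

theorem multiplication_bounded_iff (ψ : ℂ → ℂ) (hψ : AnalyticOn ℂ ψ (ball (0:ℂ) 1)) :
    BoundedOpS2 (fun f => fun z => ψ z * f z) ↔ MemS2 ψ := by
  constructor
  · intro h
    have h1 : MemS2 (fun z => ψ z * (fun _ => (1:ℂ)) z) := h.1 (fun _ => (1:ℂ)) memS2_one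
    have heq : (fun z => ψ z * (fun _ => (1:ℂ)) z) = ψ := by
      funext z; simp
    rwa [heq] at h1
  · intro hm
    exact ⟨fun f hf => (key_mul ψ f hψ hm hf).1,
      ⟨multConst ψ, fun f hf => (key_mul ψ f hψ hm hf).2⟩⟩
end
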